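/- arXiv:2107.09431 — 7 statements merged into one kernel-verified Lean document; each statement's English description precedes it below -/
import Mathlib

section
/- For every A-bounded operator T and every α ∈ [0,1], the quantity ‖T‖_{A,α} := sup over ‖x‖_A = 1 of sqrt(α|⟨Tx,x⟩_A|² + (1−α)‖Tx‖_A²) defines a seminorm on the algebra of A-bounded operators. -/
open scoped ComplexOrder
open ContinuousLinearMap Filter Topology

variable {H : Type*} [NormedAddCommGroup H] [InnerProductSpace ℂ H] [CompleteSpace H]

/-- The A-semi-inner product `⟨x, y⟩_A = ⟨A x, y⟩` (Mathlib convention: conjugate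
linear in the first variable). -/
noncomputable def aInner (A : H →L[ℂ] H) (x y : H) : ℂ := inner ℂ (A x) y

/-- The A-seminorm `‖x‖_A = sqrt ⟨x, x⟩_A`. -/
noncomputable def aNorm (A : H →L[ℂ] H) (x : H) : ℝ := Real.sqrt (aInner A x x).re

/-- `T` is A-bounded. -/
def ABounded (A T : H →L[ℂ] H) : Prop := ∃ c > 0, ∀ x, aNorm A (T x) ≤ c * aNorm A x

/-- The A-operator seminorm. -/
noncomputable def opNormA (A T : H →L[ℂ] H) : ℝ :=
  sSup {r | ∃ x ∈ closure (Set.range A), aNorm A x = 1 ∧ r = aNorm A (T x)}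

/-- The A-numerical radius. -/
noncomputable def wA (A T : H →L[ℂ] H) : ℝ :=
  sSup {r | ∃ x, aNorm A x = 1 ∧ r = ‖aInner A (T x) x‖}

/-- The A-Crawford number. -/
noncomputable def cA (A T : H →L[ℂ] H) : ℝ :=
  sInf {r | ∃ x, aNorm A x = 1 ∧ r = ‖aInner A (T x) x‖}

/-- The `A_α`-seminorm `‖T‖_{A,α}`. -/
noncomputable def alphaNorm (A T : H →L[ℂ] H) (α : ℝ) : ℝ :=
  sSup {r | ∃ x, aNorm A x = 1 ∧
    r = Real.sqrt (α * ‖aInner A (T x) x‖ ^ 2 + (1 - α) * aNorm A (T x) ^ 2)}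


open scoped Pointwise

noncomputable def aCore (A : H →L[ℂ] H) (hA : A.IsPositive) : PreInnerProductSpace.Core ℂ H where
  inner x y := inner ℂ (A x) y
  conj_inner_symm x y := by
    show (starRingEnd ℂ) (inner ℂ (A y) x) = inner ℂ (A x) y
    rw [inner_conj_symm, ← adjoint_inner_left, hA.isSelfAdjoint.adjoint_eq]
  re_inner_nonneg x := hA.2 x
  add_left x y z := by simp [map_add, inner_add_left]
  smul_left x y r := by simp [map_smul, inner_smul_left, mul_comm]

lemma aNorm_nonneg (A : H →L[ℂ] H) (x : H) : 0 ≤ aNorm A x := Real.sqrt_nonneg _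

lemma aNorm_sq (A : H →L[ℂ] H) (hA : A.IsPositive) (x : H) :
    aNorm A x ^ 2 = (aInner A x x).re :=
  Real.sq_sqrt (hA.2 x)

lemma abs_aInner_le (A : H →L[ℂ] H) (hA : A.IsPositive) (x y : H) :
    ‖aInner A x y‖ ≤ aNorm A x * aNorm A y := by
  have h : ‖aInner A x y‖ * ‖aInner A y x‖ ≤ (aInner A x x).re * (aInner A y y).re :=
    InnerProductSpace.Core.inner_mul_inner_self_le (𝕜 := ℂ) (c := aCore A hA) x y
  have hsymm : ‖aInner A y x‖ = ‖aInner A x y‖ := by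
    have h2 : (starRingEnd ℂ) (aInner A x y) = aInner A y x := (aCore A hA).conj_inner_symm y x
    rw [← h2, RCLike.norm_conj]
  have h' : ‖aInner A x y‖ ^ 2 ≤ (aNorm A x * aNorm A y) ^ 2 := by
    rw [mul_pow, aNorm_sq A hA, aNorm_sq A hA, sq]
    calc ‖aInner A x y‖ * ‖aInner A x y‖ = ‖aInner A x y‖ * ‖aInner A y x‖ := by rw [hsymm]
      _ ≤ _ := h
  calc ‖aInner A x y‖ = Real.sqrt (‖aInner A x y‖ ^ 2) := (Real.sqrt_sq (norm_nonneg _)).symm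
    _ ≤ Real.sqrt ((aNorm A x * aNorm A y) ^ 2) := Real.sqrt_le_sqrt h'
    _ = aNorm A x * aNorm A y :=
        Real.sqrt_sq (mul_nonneg (aNorm_nonneg A x) (aNorm_nonneg A y))

lemma aNorm_add_le (A : H →L[ℂ] H) (hA : A.IsPositive) (x y : H) :
    aNorm A (x + y) ≤ aNorm A x + aNorm A y := by
  have hre : (aInner A (x + y) (x + y)).re
      = (aInner A x x).re + 2 * (aInner A x y).re + (aInner A y y).re := by
    have h2 : (aInner A y x).re = (aInner A x y).re := by
      have h3 : (starRingEnd ℂ) (aInner A x y) = aInner A y x := (aCore A hA).conj_inner_symm y x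
      rw [← h3]; exact Complex.conj_re _
    simp only [aInner] at h2 ⊢
    simp only [map_add, inner_add_left, inner_add_right, Complex.add_re]
    linarith
  have hxy : (aInner A x y).re ≤ aNorm A x * aNorm A y := by
    calc (aInner A x y).re ≤ ‖aInner A x y‖ := Complex.re_le_norm _
      _ ≤ _ := abs_aInner_le A hA x y
  have : (aInner A (x + y) (x + y)).re ≤ (aNorm A x + aNorm A y) ^ 2 := by
    rw [hre]
    have hx := aNorm_sq A hA x
    have hy := aNorm_sq A hA y
    nlinarith
  calc aNorm A (x + y) = Real.sqrt ((aInner A (x+y) (x+y)).re) := rfl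
    _ ≤ Real.sqrt ((aNorm A x + aNorm A y) ^ 2) := Real.sqrt_le_sqrt this
    _ = _ := Real.sqrt_sq (add_nonneg (aNorm_nonneg A x) (aNorm_nonneg A y))

lemma aNorm_smul (A : H →L[ℂ] H) (c : ℂ) (x : H) :
    aNorm A (c • x) = ‖c‖ * aNorm A x := by
  have : (aInner A (c • x) (c • x)).re = ‖c‖ ^ 2 * (aInner A x x).re := by
    simp only [aInner, map_smul, inner_smul_left, inner_smul_right]
    rw [← mul_assoc, Complex.mul_conj, Complex.re_ofReal_mul,
      Complex.sq_norm]
  rw [aNorm, this, aNorm, Real.sqrt_mul (by positivity), Real.sqrt_sq (by positivity)]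

lemma minkowski2 {a b : ℝ} (ha : 0 ≤ a) (hb : 0 ≤ b) {a1 a2 b1 b2 : ℝ}
    (ha1 : 0 ≤ a1) (ha2 : 0 ≤ a2) (hb1 : 0 ≤ b1) (hb2 : 0 ≤ b2) :
    Real.sqrt (a * (a1 + a2) ^ 2 + b * (b1 + b2) ^ 2) ≤
      Real.sqrt (a * a1 ^ 2 + b * b1 ^ 2) + Real.sqrt (a * a2 ^ 2 + b * b2 ^ 2) := by
  set X := a * a1 ^ 2 + b * b1 ^ 2 with hX
  set Y := a * a2 ^ 2 + b * b2 ^ 2 with hY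
  have hX0 : 0 ≤ X := by positivity
  have hY0 : 0 ≤ Y := by positivity
  have key : a * (a1 * a2) + b * (b1 * b2) ≤ Real.sqrt X * Real.sqrt Y := by
    rw [← Real.sqrt_mul hX0]
    rw [Real.le_sqrt (by positivity) (by positivity)]
    nlinarith [sq_nonneg (a1 * b2 - a2 * b1), mul_nonneg ha hb, sq_nonneg (a1*a2), sq_nonneg (b1*b2)]
  have hx2 := Real.sq_sqrt hX0
  have hy2 := Real.sq_sqrt hY0
  calc Real.sqrt (a * (a1 + a2) ^ 2 + b * (b1 + b2) ^ 2)
      ≤ Real.sqrt ((Real.sqrt X + Real.sqrt Y) ^ 2) := by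
        apply Real.sqrt_le_sqrt
        nlinarith [key]
    _ = _ := Real.sqrt_sq (by positivity)

lemma alpha_bound (A : H →L[ℂ] H) (hA : A.IsPositive) {α : ℝ} (hα : α ∈ Set.Icc (0:ℝ) 1)
    {T : H →L[ℂ] H} {c : ℝ} (hc : 0 < c) (hT : ∀ x, aNorm A (T x) ≤ c * aNorm A x) :
    ∀ r ∈ {r | ∃ x, aNorm A x = 1 ∧
      r = Real.sqrt (α * ‖aInner A (T x) x‖ ^ 2 + (1 - α) * aNorm A (T x) ^ 2)},
      r ≤ c := by
  rintro r ⟨x, hx1, rfl⟩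
  have h1 : aNorm A (T x) ≤ c := by
    have := hT x; rwa [hx1, mul_one] at this
  have h2 : ‖aInner A (T x) x‖ ≤ c := by
    calc ‖aInner A (T x) x‖ ≤ aNorm A (T x) * aNorm A x := abs_aInner_le A hA _ _
      _ = aNorm A (T x) := by rw [hx1, mul_one]
      _ ≤ c := h1
  calc Real.sqrt (α * ‖aInner A (T x) x‖ ^ 2 + (1 - α) * aNorm A (T x) ^ 2)
      ≤ Real.sqrt (α * c ^ 2 + (1 - α) * c ^ 2) := by
        apply Real.sqrt_le_sqrt
        exact add_le_add
          (mul_le_mul_of_nonneg_left (pow_le_pow_left₀ (norm_nonneg _) h2 2) hα.1)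
          (mul_le_mul_of_nonneg_left (pow_le_pow_left₀ (aNorm_nonneg A _) h1 2)
            (sub_nonneg.2 hα.2))
    _ = Real.sqrt (c ^ 2) := by ring_nf
    _ = c := Real.sqrt_sq hc.le

lemma alpha_bddAbove (A : H →L[ℂ] H) (hA : A.IsPositive) {α : ℝ} (hα : α ∈ Set.Icc (0:ℝ) 1)
    {T : H →L[ℂ] H} (hT : ABounded A T) :
    BddAbove {r | ∃ x, aNorm A x = 1 ∧
      r = Real.sqrt (α * ‖aInner A (T x) x‖ ^ 2 + (1 - α) * aNorm A (T x) ^ 2)} := by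
  obtain ⟨c, hc, hTc⟩ := hT
  exact ⟨c, alpha_bound A hA hα hc hTc⟩


/-- `S` is the A-adjoint `T^{♯_A}` of `T`: the solution of `A X = T* A` whose
range lies in the closure of the range of `A`. -/
def IsAAdjoint (A T S : H →L[ℂ] H) : Prop :=
  A ∘L S = (ContinuousLinearMap.adjoint T) ∘L A ∧ ∀ x, S x ∈ closure (Set.range A)

theorem stmt2 (A : H →L[ℂ] H) (hA : A.IsPositive) (α : ℝ) (hα : α ∈ Set.Icc (0:ℝ) 1) :
    (∀ T : H →L[ℂ] H, ABounded A T → 0 ≤ alphaNorm A T α) ∧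
    (∀ T S : H →L[ℂ] H, ABounded A T → ABounded A S →
      alphaNorm A (T + S) α ≤ alphaNorm A T α + alphaNorm A S α) ∧
    (∀ (c : ℂ) (T : H →L[ℂ] H), ABounded A T →
      alphaNorm A (c • T) α = ‖c‖ * alphaNorm A T α) := by
  have hα0 := hα.1
  have hα1 : 0 ≤ 1 - α := sub_nonneg.2 hα.2
  have nonneg : ∀ T : H →L[ℂ] H, 0 ≤ alphaNorm A T α := by
    intro T
    apply Real.sSup_nonneg
    rintro r ⟨x, hx1, rfl⟩
    exact Real.sqrt_nonneg _
  refine ⟨fun T _ => nonneg T, ?_, ?_⟩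
  · intro T S hT hS
    apply Real.sSup_le _ (add_nonneg (nonneg T) (nonneg S))
    rintro r ⟨x, hx1, rfl⟩
    set a1 := ‖aInner A (T x) x‖
    set a2 := ‖aInner A (S x) x‖
    set b1 := aNorm A (T x)
    set b2 := aNorm A (S x)
    have habs : ‖aInner A ((T + S) x) x‖ ≤ a1 + a2 := by
      have : aInner A ((T + S) x) x = aInner A (T x) x + aInner A (S x) x := by
        simp [aInner, map_add, inner_add_left]
      rw [this]
      exact norm_add_le _ _
    have hnorm : aNorm A ((T + S) x) ≤ b1 + b2 := by
      rw [ContinuousLinearMap.add_apply]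
      exact aNorm_add_le A hA _ _
    calc Real.sqrt (α * ‖aInner A ((T + S) x) x‖ ^ 2 + (1 - α) * aNorm A ((T + S) x) ^ 2)
        ≤ Real.sqrt (α * (a1 + a2) ^ 2 + (1 - α) * (b1 + b2) ^ 2) := by
          apply Real.sqrt_le_sqrt
          exact add_le_add
            (mul_le_mul_of_nonneg_left (pow_le_pow_left₀ (norm_nonneg _) habs 2) hα0)
            (mul_le_mul_of_nonneg_left (pow_le_pow_left₀ (aNorm_nonneg A _) hnorm 2) hα1)
      _ ≤ Real.sqrt (α * a1 ^ 2 + (1 - α) * b1 ^ 2) + Real.sqrt (α * a2 ^ 2 + (1 - α) * b2 ^ 2) :=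
          minkowski2 hα0 hα1 (norm_nonneg _) (norm_nonneg _)
            (aNorm_nonneg A _) (aNorm_nonneg A _)
      _ ≤ alphaNorm A T α + alphaNorm A S α :=
          add_le_add (le_csSup (alpha_bddAbove A hA hα hT) ⟨x, hx1, rfl⟩)
            (le_csSup (alpha_bddAbove A hA hα hS) ⟨x, hx1, rfl⟩)
  · intro c T hT
    have hpt : ∀ x, Real.sqrt (α * ‖aInner A ((c • T) x) x‖ ^ 2
        + (1 - α) * aNorm A ((c • T) x) ^ 2)
        = ‖c‖ * Real.sqrt (α * ‖aInner A (T x) x‖ ^ 2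
            + (1 - α) * aNorm A (T x) ^ 2) := by
      intro x
      have h1 : ‖aInner A ((c • T) x) x‖ = ‖c‖ * ‖aInner A (T x) x‖ := by
        have : aInner A ((c • T) x) x = (starRingEnd ℂ) c * aInner A (T x) x := by
          simp [aInner, map_smul, inner_smul_left, mul_comm]
        rw [this, norm_mul, RCLike.norm_conj]
      have h2 : aNorm A ((c • T) x) = ‖c‖ * aNorm A (T x) := by
        rw [ContinuousLinearMap.smul_apply]
        exact aNorm_smul A c _
      rw [h1, h2]
      rw [show α * (‖c‖ * ‖aInner A (T x) x‖) ^ 2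
          + (1 - α) * (‖c‖ * aNorm A (T x)) ^ 2
          = ‖c‖ ^ 2 * (α * ‖aInner A (T x) x‖ ^ 2
              + (1 - α) * aNorm A (T x) ^ 2) by ring]
      rw [Real.sqrt_mul (sq_nonneg _), Real.sqrt_sq (norm_nonneg _)]
    have hset : {r | ∃ x, aNorm A x = 1 ∧
        r = Real.sqrt (α * ‖aInner A ((c • T) x) x‖ ^ 2
          + (1 - α) * aNorm A ((c • T) x) ^ 2)}
        = ‖c‖ • {r | ∃ x, aNorm A x = 1 ∧
            r = Real.sqrt (α * ‖aInner A (T x) x‖ ^ 2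
              + (1 - α) * aNorm A (T x) ^ 2)} := by
      ext r
      constructor
      · rintro ⟨x, hx1, rfl⟩
        exact ⟨_, ⟨x, hx1, rfl⟩, (hpt x).symm⟩
      · rintro ⟨r', ⟨x, hx1, rfl⟩, rfl⟩
        exact ⟨x, hx1, (hpt x).symm⟩
    rw [alphaNorm, hset, Real.sSup_smul_of_nonneg (norm_nonneg c)]
    rfl
end

section
/- For every A-bounded operator T and α ∈ [0,1], w_A(T) ≤ ‖T‖_{A,α} ≤ sqrt(4 − 3α) · w_A(T), where w_A(T) is the A-numerical radius. -/
open scoped ComplexOrder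
open ContinuousLinearMap Filter Topology

variable {H : Type*} [NormedAddCommGroup H] [InnerProductSpace ℂ H] [CompleteSpace H]

set_option linter.unusedSectionVars false

namespace Stmt3Aux

noncomputable def myCore (A : H →L[ℂ] H) (hA : A.IsPositive) : PreInnerProductSpace.Core ℂ H where
  inner x y := aInner A x y
  conj_inner_symm x y := by
    have hs := (isSelfAdjoint_iff_isSymmetric.mp hA.isSelfAdjoint)
    simp only [aInner]
    rw [← inner_conj_symm, Complex.conj_conj]
    exact (hs x y).symm
  re_inner_nonneg x := hA.re_inner_nonneg_left x
  add_left x y z := by simp [aInner, inner_add_left]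
  smul_left x y r := by simp [aInner, inner_smul_left, mul_comm]

lemma aInner_conj (A : H →L[ℂ] H) (hA : A.IsPositive) (x y : H) :
    aInner A y x = starRingEnd ℂ (aInner A x y) :=
  ((myCore A hA).conj_inner_symm y x).symm

lemma aInner_re_nonneg (A : H →L[ℂ] H) (hA : A.IsPositive) (x : H) :
    0 ≤ (aInner A x x).re := hA.re_inner_nonneg_left x

lemma aNorm_nonneg (A : H →L[ℂ] H) (x : H) : 0 ≤ aNorm A x := Real.sqrt_nonneg _

lemma aNorm_sq (A : H →L[ℂ] H) (hA : A.IsPositive) (x : H) :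
    aNorm A x ^ 2 = (aInner A x x).re :=
  Real.sq_sqrt (aInner_re_nonneg A hA x)

lemma aInner_self_im (A : H →L[ℂ] H) (hA : A.IsPositive) (x : H) :
    (aInner A x x).im = 0 := by
  have h := aInner_conj A hA x x
  have := congrArg Complex.im h
  simp only [Complex.conj_im] at this
  linarith

lemma abs_aInner_le (A : H →L[ℂ] H) (hA : A.IsPositive) (x y : H) :
    ‖aInner A x y‖ ≤ aNorm A x * aNorm A y := by
  have h : ‖aInner A x y‖ * ‖aInner A y x‖ ≤ (aInner A x x).re * (aInner A y y).re :=
    @InnerProductSpace.Core.inner_mul_inner_self_le ℂ H _ _ _ (myCore A hA) x y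
  rw [aInner_conj A hA x y, RCLike.norm_conj] at h
  have h2 : ‖aInner A x y‖ ^ 2 ≤ (aNorm A x * aNorm A y) ^ 2 := by
    rw [mul_pow, aNorm_sq A hA, aNorm_sq A hA]
    calc ‖aInner A x y‖ ^ 2 = ‖aInner A x y‖ * ‖aInner A x y‖ := by ring
    _ ≤ _ := h
  have := abs_le_abs (a := ‖aInner A x y‖) (b := aNorm A x * aNorm A y)
  calc ‖aInner A x y‖ = ‖aInner A x y‖ := rfl
  _ ≤ aNorm A x * aNorm A y := by
      nlinarith [norm_nonneg (aInner A x y), mul_nonneg (aNorm_nonneg A x) (aNorm_nonneg A y)]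

lemma aNorm_smul (A : H →L[ℂ] H) (c : ℂ) (x : H) :
    aNorm A (c • x) = ‖c‖ * aNorm A x := by
  have h : aInner A (c • x) (c • x) = (Complex.normSq c : ℂ) * aInner A x x := by
    simp only [aInner, map_smul, inner_smul_left, inner_smul_right]
    rw [← mul_assoc, Complex.mul_conj]
  simp only [aNorm, h, Complex.mul_re, Complex.ofReal_re, Complex.ofReal_im, zero_mul, sub_zero]
  rw [Real.sqrt_mul (Complex.normSq_nonneg c), ← Complex.norm_def]



lemma expandT (A T : H →L[ℂ] H) (x y : H) (c : ℂ) :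
    aInner A (T (x + c • y)) (x + c • y)
      = aInner A (T x) x + c * aInner A (T x) y + (starRingEnd ℂ c) * aInner A (T y) x
        + (Complex.normSq c : ℂ) * aInner A (T y) y := by
  simp only [aInner, map_add, map_smul, inner_add_left, inner_add_right, inner_smul_left,
    inner_smul_right, Complex.normSq_eq_conj_mul_self]
  ring

lemma polar (A T : H →L[ℂ] H) (x y : H) :
    4 * aInner A (T x) y
      = aInner A (T (x + (1:ℂ) • y)) (x + (1:ℂ) • y)
        - Complex.I * aInner A (T (x + Complex.I • y)) (x + Complex.I • y)
        - aInner A (T (x + (-1:ℂ) • y)) (x + (-1:ℂ) • y)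
        + Complex.I * aInner A (T (x + (-Complex.I) • y)) (x + (-Complex.I) • y) := by
  rw [expandT, expandT, expandT, expandT]
  simp only [map_one, map_neg, Complex.conj_I, Complex.normSq_one, Complex.normSq_I,
    Complex.normSq_neg, Complex.ofReal_one]
  linear_combination (2 * aInner A (T x) y - 2 * aInner A (T y) x) * Complex.I_mul_I

lemma normsum (A T : H →L[ℂ] H) (x y : H) :
    aInner A (x + (1:ℂ) • y) (x + (1:ℂ) • y)
      + aInner A (x + Complex.I • y) (x + Complex.I • y)
      + aInner A (x + (-1:ℂ) • y) (x + (-1:ℂ) • y)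
      + aInner A (x + (-Complex.I) • y) (x + (-Complex.I) • y)
      = 4 * (aInner A x x + aInner A y y) := by
  have h := fun c => expandT A 1 x y c
  simp only [ContinuousLinearMap.one_apply] at h
  rw [h, h, h, h]
  simp only [map_one, map_neg, Complex.conj_I, Complex.normSq_one, Complex.normSq_I,
    Complex.normSq_neg, Complex.ofReal_one]
  ring

end Stmt3Aux

theorem stmt3 (A T : H →L[ℂ] H) (hA : A.IsPositive) (hT : ABounded A T)
    (α : ℝ) (hα : α ∈ Set.Icc (0:ℝ) 1) :
    wA A T ≤ alphaNorm A T α ∧ alphaNorm A T α ≤ Real.sqrt (4 - 3 * α) * wA A T := by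
  obtain ⟨c, hc0, hbd⟩ := hT
  obtain ⟨hα0, hα1⟩ := hα
  by_cases hex : ∃ x : H, aNorm A x = 1
  case neg =>
    have hW : {r | ∃ x, aNorm A x = 1 ∧ r = ‖aInner A (T x) x‖} = (∅ : Set ℝ) := by
      ext r
      simp only [Set.mem_setOf_eq, Set.mem_empty_iff_false, iff_false, not_exists]
      exact fun x hx => absurd ⟨x, hx.1⟩ hex
    have hS : {r | ∃ x, aNorm A x = 1 ∧ r = Real.sqrt (α * ‖aInner A (T x) x‖ ^ 2
        + (1 - α) * aNorm A (T x) ^ 2)} = (∅ : Set ℝ) := by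
      ext r
      simp only [Set.mem_setOf_eq, Set.mem_empty_iff_false, iff_false, not_exists]
      exact fun x hx => absurd ⟨x, hx.1⟩ hex
    rw [wA, alphaNorm, hW, hS, Real.sSup_empty]
    simp
  case pos =>
  obtain ⟨x0, hx0⟩ := hex
  have hTb : ∀ x : H, aNorm A x = 1 → aNorm A (T x) ≤ c := fun x hx => by
    have := hbd x; rwa [hx, mul_one] at this
  have hab : ∀ x : H, aNorm A x = 1 → ‖aInner A (T x) x‖ ≤ c := fun x hx => by
    have h1 := Stmt3Aux.abs_aInner_le A hA (T x) x
    rw [hx, mul_one] at h1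
    exact h1.trans (hTb x hx)
  have hWbdd : BddAbove {r | ∃ x, aNorm A x = 1 ∧ r = ‖aInner A (T x) x‖} := by
    refine ⟨c, ?_⟩; rintro r ⟨x, hx, rfl⟩; exact hab x hx
  have hSbdd : BddAbove {r | ∃ x, aNorm A x = 1 ∧ r = Real.sqrt (α * ‖aInner A (T x) x‖ ^ 2
      + (1 - α) * aNorm A (T x) ^ 2)} := by
    refine ⟨c, ?_⟩; rintro r ⟨x, hx, rfl⟩
    have h1 := hab x hx; have h2 := hTb x hx
    have ha2 : ‖aInner A (T x) x‖ ^ 2 ≤ c ^ 2 := by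
      nlinarith [norm_nonneg (aInner A (T x) x)]
    have hb2 : aNorm A (T x) ^ 2 ≤ c ^ 2 := by
      nlinarith [Stmt3Aux.aNorm_nonneg A (T x)]
    have h3 : α * ‖aInner A (T x) x‖ ^ 2 + (1 - α) * aNorm A (T x) ^ 2 ≤ c ^ 2 := by
      nlinarith [mul_nonneg hα0 (sub_nonneg.2 ha2),
        mul_nonneg (show (0:ℝ) ≤ 1 - α by linarith) (sub_nonneg.2 hb2)]
    calc Real.sqrt (α * ‖aInner A (T x) x‖ ^ 2 + (1 - α) * aNorm A (T x) ^ 2)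
        ≤ Real.sqrt (c ^ 2) := Real.sqrt_le_sqrt h3
      _ = c := Real.sqrt_sq hc0.le
  have hwle : ∀ x : H, aNorm A x = 1 → ‖aInner A (T x) x‖ ≤ wA A T :=
    fun x hx => le_csSup hWbdd ⟨x, hx, rfl⟩
  have hw0 : 0 ≤ wA A T := (norm_nonneg _).trans (hwle x0 hx0)
  -- |⟨Tu,u⟩_A| ≤ wA ‖u‖_A² for all u
  have hP2 : ∀ u : H, ‖aInner A (T u) u‖ ≤ wA A T * aNorm A u ^ 2 := by
    intro u
    rcases eq_or_lt_of_le (Stmt3Aux.aNorm_nonneg A u) with h0 | h0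
    · have h1 := Stmt3Aux.abs_aInner_le A hA (T u) u
      rw [← h0, mul_zero] at h1
      rw [← h0]
      simpa using h1
    · set t := aNorm A u with ht
      have hv : aNorm A (((t : ℂ))⁻¹ • u) = 1 := by
        rw [Stmt3Aux.aNorm_smul, norm_inv, Complex.norm_real, Real.norm_of_nonneg h0.le, ← ht]
        field_simp
      have hiden : aInner A (T (((t:ℂ))⁻¹ • u)) (((t:ℂ))⁻¹ • u)
          = (starRingEnd ℂ ((t:ℂ)⁻¹)) * ((t:ℂ))⁻¹ * aInner A (T u) u := by
        simp only [aInner, map_smul, inner_smul_left, inner_smul_right]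
        ring
      have habs2 : ‖aInner A (T (((t:ℂ))⁻¹ • u)) (((t:ℂ))⁻¹ • u)‖
          = t⁻¹ * (t⁻¹ * ‖aInner A (T u) u‖) := by
        rw [hiden, norm_mul, norm_mul, Complex.norm_conj, norm_inv, Complex.norm_real,
          Real.norm_of_nonneg h0.le, mul_assoc]
      have hle := hwle _ hv
      rw [habs2] at hle
      have hkey : t ^ 2 * (t⁻¹ * (t⁻¹ * ‖aInner A (T u) u‖))
          = ‖aInner A (T u) u‖ := by
        field_simp
      calc ‖aInner A (T u) u‖
          = t ^ 2 * (t⁻¹ * (t⁻¹ * ‖aInner A (T u) u‖)) := hkey.symm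
        _ ≤ t ^ 2 * wA A T := by
            exact mul_le_mul_of_nonneg_left hle (sq_nonneg t)
        _ = wA A T * aNorm A u ^ 2 := by rw [← ht]; ring
  -- polarization bound
  have hP3 : ∀ x y : H, aNorm A x = 1 → aNorm A y = 1 →
      ‖aInner A (T x) y‖ ≤ 2 * wA A T := by
    intro x y hx hy
    have hpol := Stmt3Aux.polar A T x y
    set E1 := aInner A (T (x + (1:ℂ) • y)) (x + (1:ℂ) • y) with hE1
    set E2 := aInner A (T (x + Complex.I • y)) (x + Complex.I • y) with hE2
    set E3 := aInner A (T (x + (-1:ℂ) • y)) (x + (-1:ℂ) • y) with hE3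
    set E4 := aInner A (T (x + (-Complex.I) • y)) (x + (-Complex.I) • y) with hE4
    have htri : ‖E1 - Complex.I * E2 - E3 + Complex.I * E4‖
        ≤ ‖E1‖ + ‖E2‖ + ‖E3‖ + ‖E4‖ := by
      calc ‖E1 - Complex.I * E2 - E3 + Complex.I * E4‖
          ≤ ‖E1 - Complex.I * E2 - E3‖ + ‖Complex.I * E4‖ := norm_add_le _ _
        _ ≤ ‖E1 - Complex.I * E2‖ + ‖E3‖ + ‖Complex.I * E4‖ :=
            add_le_add_left (norm_sub_le _ _) _
        _ ≤ ‖E1‖ + ‖Complex.I * E2‖ + ‖E3‖ + ‖Complex.I * E4‖ := by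
            have := norm_sub_le E1 (Complex.I * E2)
            linarith
        _ = ‖E1‖ + ‖E2‖ + ‖E3‖ + ‖E4‖ := by
            rw [norm_mul, norm_mul, Complex.norm_I, one_mul, one_mul]
    have h4 : (4:ℝ) * ‖aInner A (T x) y‖
        = ‖4 * aInner A (T x) y‖ := by
      rw [norm_mul]
      norm_num
    -- norm sum identity
    have hns := Stmt3Aux.normsum A T x y
    have hrex : (aInner A x x).re = 1 := by
      rw [← Stmt3Aux.aNorm_sq A hA, hx]; norm_num
    have hrey : (aInner A y y).re = 1 := by
      rw [← Stmt3Aux.aNorm_sq A hA, hy]; norm_num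
    have hre := congrArg Complex.re hns
    simp only [Complex.add_re] at hre
    have hre4 : (aInner A (x + (1:ℂ) • y) (x + (1:ℂ) • y)).re
        + (aInner A (x + Complex.I • y) (x + Complex.I • y)).re
        + (aInner A (x + (-1:ℂ) • y) (x + (-1:ℂ) • y)).re
        + (aInner A (x + (-Complex.I) • y) (x + (-Complex.I) • y)).re = 8 := by
      rw [hre]
      simp only [Complex.mul_re, Complex.add_re, hrex, hrey]
      norm_num
    have hb1 := hP2 (x + (1:ℂ) • y)
    have hb2 := hP2 (x + Complex.I • y)
    have hb3 := hP2 (x + (-1:ℂ) • y)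
    have hb4 := hP2 (x + (-Complex.I) • y)
    rw [Stmt3Aux.aNorm_sq A hA] at hb1 hb2 hb3 hb4
    have hnn : ∀ u : H, (0:ℝ) ≤ (aInner A u u).re := Stmt3Aux.aInner_re_nonneg A hA
    have hchain : (4:ℝ) * ‖aInner A (T x) y‖ ≤ 8 * wA A T := by
      rw [h4, hpol]
      calc ‖E1 - Complex.I * E2 - E3 + Complex.I * E4‖
          ≤ ‖E1‖ + ‖E2‖ + ‖E3‖ + ‖E4‖ := htri
        _ ≤ wA A T * (aInner A (x + (1:ℂ) • y) (x + (1:ℂ) • y)).re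
            + wA A T * (aInner A (x + Complex.I • y) (x + Complex.I • y)).re
            + wA A T * (aInner A (x + (-1:ℂ) • y) (x + (-1:ℂ) • y)).re
            + wA A T * (aInner A (x + (-Complex.I) • y) (x + (-Complex.I) • y)).re := by
            exact add_le_add (add_le_add (add_le_add hb1 hb2) hb3) hb4
        _ = wA A T * ((aInner A (x + (1:ℂ) • y) (x + (1:ℂ) • y)).re
            + (aInner A (x + Complex.I • y) (x + Complex.I • y)).re
            + (aInner A (x + (-1:ℂ) • y) (x + (-1:ℂ) • y)).re
            + (aInner A (x + (-Complex.I) • y) (x + (-Complex.I) • y)).re) := by ring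
        _ = 8 * wA A T := by rw [hre4]; ring
    linarith
  -- ‖Tx‖_A ≤ 2 wA for unit x
  have hP4 : ∀ x : H, aNorm A x = 1 → aNorm A (T x) ≤ 2 * wA A T := by
    intro x hx
    rcases eq_or_lt_of_le (Stmt3Aux.aNorm_nonneg A (T x)) with h0 | h0
    · rw [← h0]; positivity
    · set b := aNorm A (T x) with hbdef
      have hy : aNorm A (((b:ℂ))⁻¹ • T x) = 1 := by
        rw [Stmt3Aux.aNorm_smul, norm_inv, Complex.norm_real, Real.norm_of_nonneg h0.le]
        field_simp
        exact hbdef.symm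
      have hself : aInner A (T x) (T x) = ((b ^ 2 : ℝ) : ℂ) := by
        apply Complex.ext
        · rw [← Stmt3Aux.aNorm_sq A hA, ← hbdef]
          simp [← Complex.ofReal_pow]
        · rw [Stmt3Aux.aInner_self_im A hA]
          simp [← Complex.ofReal_pow]
      have hval : aInner A (T x) (((b:ℂ))⁻¹ • T x) = ((b : ℝ) : ℂ) := by
        have : aInner A (T x) (((b:ℂ))⁻¹ • T x) = ((b:ℂ))⁻¹ * aInner A (T x) (T x) := by
          simp [aInner, inner_smul_right]
        rw [this, hself, ← Complex.ofReal_inv, ← Complex.ofReal_mul]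
        congr 1
        field_simp
      have hh := hP3 x _ hx hy
      rw [hval, Complex.norm_real, Real.norm_of_nonneg h0.le] at hh
      exact hh
  constructor
  · -- wA ≤ alphaNorm
    refine csSup_le ⟨‖aInner A (T x0) x0‖, x0, hx0, rfl⟩ ?_
    rintro r ⟨x, hx, rfl⟩
    have hcs : ‖aInner A (T x) x‖ ≤ aNorm A (T x) := by
      have := Stmt3Aux.abs_aInner_le A hA (T x) x
      rwa [hx, mul_one] at this
    have h1 : ‖aInner A (T x) x‖
        ≤ Real.sqrt (α * ‖aInner A (T x) x‖ ^ 2 + (1 - α) * aNorm A (T x) ^ 2) := by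
      have ha0 := norm_nonneg (aInner A (T x) x)
      have hsq : ‖aInner A (T x) x‖ ^ 2 ≤ aNorm A (T x) ^ 2 := by
        nlinarith [Stmt3Aux.aNorm_nonneg A (T x)]
      conv_lhs => rw [← Real.sqrt_sq ha0]
      apply Real.sqrt_le_sqrt
      nlinarith [mul_nonneg (show (0:ℝ) ≤ 1 - α by linarith) (sub_nonneg.2 hsq)]
    exact h1.trans (le_csSup hSbdd ⟨x, hx, rfl⟩)
  · -- alphaNorm ≤ sqrt(4-3α) wA
    refine csSup_le ⟨_, x0, hx0, rfl⟩ ?_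
    rintro r ⟨x, hx, rfl⟩
    have ha := hwle x hx
    have hb := hP4 x hx
    have h43 : (0:ℝ) ≤ 4 - 3 * α := by linarith
    have ha2 : ‖aInner A (T x) x‖ ^ 2 ≤ wA A T ^ 2 := by
      nlinarith [norm_nonneg (aInner A (T x) x)]
    have hb2 : aNorm A (T x) ^ 2 ≤ 4 * wA A T ^ 2 := by
      nlinarith [Stmt3Aux.aNorm_nonneg A (T x)]
    have hsum : α * ‖aInner A (T x) x‖ ^ 2 + (1 - α) * aNorm A (T x) ^ 2
        ≤ (4 - 3 * α) * wA A T ^ 2 := by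
      nlinarith [mul_nonneg hα0 (sub_nonneg.2 ha2),
        mul_nonneg (show (0:ℝ) ≤ 1 - α by linarith) (sub_nonneg.2 hb2)]
    calc Real.sqrt (α * ‖aInner A (T x) x‖ ^ 2 + (1 - α) * aNorm A (T x) ^ 2)
        ≤ Real.sqrt ((4 - 3 * α) * wA A T ^ 2) := Real.sqrt_le_sqrt hsum
      _ = Real.sqrt (4 - 3 * α) * wA A T := by
          rw [Real.sqrt_mul h43, Real.sqrt_sq hw0]
end

section
/- For every A-bounded operator T and α ∈ [0,1], max{1/2, sqrt(1−α)} · ‖T‖_A ≤ ‖T‖_{A,α} ≤ ‖T‖_A, where ‖T‖_A is the A-operator seminorm. -/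
open scoped ComplexOrder
open ContinuousLinearMap Filter Topology

variable {H : Type*} [NormedAddCommGroup H] [InnerProductSpace ℂ H] [CompleteSpace H]

lemma exists_sqrt' (A : H →L[ℂ] H) (hA : A.IsPositive) :
    ∃ S : H →L[ℂ] H, IsSelfAdjoint S ∧ S ∘L S = A := by
  have h0 : (0:H→L[ℂ]H) ≤ A := (ContinuousLinearMap.nonneg_iff_isPositive A).2 hA
  refine ⟨CFC.sqrt A, IsSelfAdjoint.of_nonneg (CFC.sqrt_nonneg A), ?_⟩
  have := CFC.sq_sqrt A h0
  rwa [sq] at this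

lemma aInner_eq_inner' {A S : H →L[ℂ] H} (hS : IsSelfAdjoint S) (hSS : S ∘L S = A)
    (x y : H) : aInner A x y = inner ℂ (S x) (S y) := by
  have hAx : A x = S (S x) := by rw [← hSS]; rfl
  rw [aInner, hAx]
  have : S (S x) = ContinuousLinearMap.adjoint S (S x) := by
    rw [isSelfAdjoint_iff'.mp hS]
  rw [this, ContinuousLinearMap.adjoint_inner_left]

lemma aNorm_eq_norm' {A S : H →L[ℂ] H} (hS : IsSelfAdjoint S) (hSS : S ∘L S = A)
    (x : H) : aNorm A x = ‖S x‖ := by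
  rw [aNorm, aInner_eq_inner' hS hSS, ← RCLike.re_to_complex,
    inner_self_eq_norm_sq (𝕜 := ℂ), Real.sqrt_sq (norm_nonneg _)]

theorem stmt4 (A T : H →L[ℂ] H) (hA : A.IsPositive) (hT : ABounded A T)
    (α : ℝ) (hα : α ∈ Set.Icc (0:ℝ) 1) :
    max (1/2) (Real.sqrt (1 - α)) * opNormA A T ≤ alphaNorm A T α ∧
    alphaNorm A T α ≤ opNormA A T := by
  obtain ⟨S, hS, hSS⟩ := exists_sqrt' A hA
  obtain ⟨c, hc0, hc⟩ := hT
  obtain ⟨hα0, hα1⟩ := hα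
  have hN : ∀ x, aNorm A x = ‖S x‖ := aNorm_eq_norm' hS hSS
  have hI : ∀ x y, aInner A x y = inner ℂ (S x) (S y) := aInner_eq_inner' hS hSS
  have hCS : ∀ x y : H, ‖aInner A x y‖ ≤ aNorm A x * aNorm A y := by
    intro x y
    rw [hI, hN, hN]
    exact norm_inner_le_norm _ _
  have hNnn : ∀ x, 0 ≤ aNorm A x := fun x => by rw [hN]; positivity
  set Sα : Set ℝ := {r | ∃ x, aNorm A x = 1 ∧
    r = Real.sqrt (α * ‖aInner A (T x) x‖ ^ 2 + (1 - α) * aNorm A (T x) ^ 2)}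
    with hSαdef
  set Sop : Set ℝ := {r | ∃ x ∈ closure (Set.range A), aNorm A x = 1 ∧ r = aNorm A (T x)}
    with hSopdef
  have halphaEq : alphaNorm A T α = sSup Sα := rfl
  have hopEq : opNormA A T = sSup Sop := rfl
  -- the alpha-expression is at most `aNorm A (T x)` for unit x
  have key : ∀ x, aNorm A x = 1 →
      Real.sqrt (α * ‖aInner A (T x) x‖ ^ 2 + (1 - α) * aNorm A (T x) ^ 2)
        ≤ aNorm A (T x) := by
    intro x hx
    have h1 : ‖aInner A (T x) x‖ ≤ aNorm A (T x) := by
      have := hCS (T x) x; rwa [hx, mul_one] at this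
    have h2 : 0 ≤ aNorm A (T x) := hNnn _
    have h3 : 0 ≤ ‖aInner A (T x) x‖ := norm_nonneg _
    calc Real.sqrt (α * ‖aInner A (T x) x‖ ^ 2 + (1 - α) * aNorm A (T x) ^ 2)
        ≤ Real.sqrt (aNorm A (T x) ^ 2) := by
          apply Real.sqrt_le_sqrt
          have hq2 : ‖aInner A (T x) x‖ ^ 2 ≤ aNorm A (T x) ^ 2 := by nlinarith
          nlinarith [mul_le_mul_of_nonneg_left hq2 hα0]
      _ = aNorm A (T x) := Real.sqrt_sq h2
  have hbα : ∀ r ∈ Sα, r ≤ c := by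
    rintro r ⟨x, hx, rfl⟩
    refine (key x hx).trans ?_
    have := hc x; rwa [hx, mul_one] at this
  have hbddα : BddAbove Sα := ⟨c, hbα⟩
  have hαnn : 0 ≤ alphaNorm A T α := by
    rw [halphaEq]
    exact Real.sSup_nonneg (by rintro r ⟨x, hx, rfl⟩; positivity)
  have hbop : ∀ r ∈ Sop, r ≤ c := by
    rintro r ⟨x, -, hx, rfl⟩
    have := hc x; rwa [hx, mul_one] at this
  have hbddop : BddAbove Sop := ⟨c, hbop⟩
  have hopnn : 0 ≤ opNormA A T := by
    rw [hopEq]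
    exact Real.sSup_nonneg (by rintro r ⟨x, -, hx, rfl⟩; exact hNnn _)
  -- |⟨Tx, x⟩_A| ≤ alphaNorm for unit x
  have hQle : ∀ x, aNorm A x = 1 → ‖aInner A (T x) x‖ ≤ alphaNorm A T α := by
    intro x hx
    have h1 : ‖aInner A (T x) x‖ ≤ aNorm A (T x) := by
      have := hCS (T x) x; rwa [hx, mul_one] at this
    have h3 : 0 ≤ ‖aInner A (T x) x‖ := norm_nonneg _
    have h4 : ‖aInner A (T x) x‖
        ≤ Real.sqrt (α * ‖aInner A (T x) x‖ ^ 2 + (1 - α) * aNorm A (T x) ^ 2) := by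
      rw [show ‖aInner A (T x) x‖
          = Real.sqrt (‖aInner A (T x) x‖ ^ 2) from (Real.sqrt_sq h3).symm]
      apply Real.sqrt_le_sqrt
      rw [Real.sq_sqrt (by positivity)]
      have hq2 : ‖aInner A (T x) x‖ ^ 2 ≤ aNorm A (T x) ^ 2 := by nlinarith
      nlinarith [mul_le_mul_of_nonneg_left hq2 (by linarith : (0:ℝ) ≤ 1 - α)]
    refine h4.trans ?_
    rw [halphaEq]
    exact le_csSup hbddα ⟨x, hx, rfl⟩
  -- |⟨Tz, z⟩_A| ≤ alphaNorm * ‖z‖_A² for all z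
  have hB : ∀ z, ‖aInner A (T z) z‖ ≤ alphaNorm A T α * aNorm A z ^ 2 := by
    intro z
    by_cases hz : aNorm A z = 0
    · have h1 := hCS (T z) z
      rw [hz, mul_zero] at h1
      have : ‖aInner A (T z) z‖ = 0 := le_antisymm h1 (norm_nonneg _)
      rw [this, hz]; positivity
    · have hz0 : 0 < aNorm A z := lt_of_le_of_ne (hNnn z) (Ne.symm hz)
      set t : ℂ := ((aNorm A z : ℂ))⁻¹ with ht
      set u : H := t • z with hu
      have hnt : ‖t‖ = (aNorm A z)⁻¹ := by
        rw [ht, norm_inv, Complex.norm_real, Real.norm_eq_abs, abs_of_pos hz0]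
      have hu1 : aNorm A u = 1 := by
        rw [hN, hu, map_smul, norm_smul, hnt, ← hN, inv_mul_cancel₀ hz]
      have hTu : aInner A (T u) u = (starRingEnd ℂ) t * (t * aInner A (T z) z) := by
        rw [hu, map_smul, hI, map_smul, map_smul, inner_smul_left, inner_smul_right, ← hI]
      have habs : ‖aInner A (T u) u‖
          = (aNorm A z)⁻¹ * ((aNorm A z)⁻¹ * ‖aInner A (T z) z‖) := by
        rw [hTu, norm_mul, norm_mul, Complex.norm_conj, hnt]
      have := hQle u hu1
      rw [habs] at this
      have h2 : ‖aInner A (T z) z‖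
          = aNorm A z ^ 2 * ((aNorm A z)⁻¹ * ((aNorm A z)⁻¹ * ‖aInner A (T z) z‖)) := by
        field_simp
      rw [h2]
      calc aNorm A z ^ 2 * ((aNorm A z)⁻¹ * ((aNorm A z)⁻¹ * ‖aInner A (T z) z‖))
          ≤ aNorm A z ^ 2 * alphaNorm A T α := by
            apply mul_le_mul_of_nonneg_left this (by positivity)
        _ = alphaNorm A T α * aNorm A z ^ 2 := by ring
  -- polarization: |⟨Tx, y⟩_A| ≤ 2 * alphaNorm for unit x, y
  have hPol : ∀ x y, aNorm A x = 1 → aNorm A y = 1 →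
      ‖aInner A (T x) y‖ ≤ 2 * alphaNorm A T α := by
    intro x y hx hy
    have hpol := inner_map_polarization' ((A ∘L T) : H →ₗ[ℂ] H) x y
    have hATz : ∀ z w : H, (inner ℂ (((A ∘L T) : H →ₗ[ℂ] H) z) w : ℂ) = aInner A (T z) w := by
      intro z w; rfl
    rw [hATz, hATz, hATz, hATz, hATz] at hpol
    have e1 := hB (x + y)
    have e2 := hB (x - y)
    have e3 := hB (x + Complex.I • y)
    have e4 := hB (x - Complex.I • y)
    have hIy : ‖S (Complex.I • y)‖ = ‖S y‖ := by
      rw [map_smul, norm_smul, Complex.norm_I, one_mul]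
    have hxn : ‖S x‖ = 1 := by rw [← hN, hx]
    have hyn : ‖S y‖ = 1 := by rw [← hN, hy]
    have p1 : aNorm A (x + y) ^ 2 + aNorm A (x - y) ^ 2 = 4 := by
      have hp := parallelogram_law_with_norm ℂ (S x) (S y)
      rw [hxn, hyn] at hp
      rw [hN, hN, map_add, map_sub, hp]
      norm_num
    have p2 : aNorm A (x + Complex.I • y) ^ 2 + aNorm A (x - Complex.I • y) ^ 2 = 4 := by
      have hp := parallelogram_law_with_norm ℂ (S x) (Complex.I • S y)
      rw [hxn, norm_smul, Complex.norm_I, one_mul, hyn] at hp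
      rw [hN, hN, map_add, map_sub, map_smul, hp]
      norm_num
    have habs4 : ‖aInner A (T x) y‖ * 4 ≤
        ‖aInner A (T (x+y)) (x+y)‖ + ‖aInner A (T (x-y)) (x-y)‖
        + ‖aInner A (T (x + Complex.I • y)) (x + Complex.I • y)‖
        + ‖aInner A (T (x - Complex.I • y)) (x - Complex.I • y)‖ := by
      rw [hpol]
      rw [norm_div]
      have h4 : ‖(4:ℂ)‖ = 4 := by norm_num
      rw [h4, div_mul_cancel₀ _ (by norm_num : (4:ℝ) ≠ 0)]
      calc ‖aInner A (T (x+y)) (x+y) - aInner A (T (x-y)) (x-y)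
            - Complex.I * aInner A (T (x + Complex.I • y)) (x + Complex.I • y)
            + Complex.I * aInner A (T (x - Complex.I • y)) (x - Complex.I • y)‖
          ≤ ‖aInner A (T (x+y)) (x+y) - aInner A (T (x-y)) (x-y)
            - Complex.I * aInner A (T (x + Complex.I • y)) (x + Complex.I • y)‖
            + ‖Complex.I * aInner A (T (x - Complex.I • y)) (x - Complex.I • y)‖ :=
            norm_add_le _ _
        _ ≤ ‖aInner A (T (x+y)) (x+y) - aInner A (T (x-y)) (x-y)‖
            + ‖Complex.I * aInner A (T (x + Complex.I • y)) (x + Complex.I • y)‖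
            + ‖Complex.I * aInner A (T (x - Complex.I • y)) (x - Complex.I • y)‖ := by
            gcongr; exact norm_sub_le _ _
        _ ≤ ‖aInner A (T (x+y)) (x+y)‖ + ‖aInner A (T (x-y)) (x-y)‖
            + ‖Complex.I * aInner A (T (x + Complex.I • y)) (x + Complex.I • y)‖
            + ‖Complex.I * aInner A (T (x - Complex.I • y)) (x - Complex.I • y)‖ := by
            have := norm_sub_le (aInner A (T (x+y)) (x+y)) (aInner A (T (x-y)) (x-y))
            linarith
        _ = _ := by
            rw [norm_mul, norm_mul, Complex.norm_I, one_mul, one_mul]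
    have hsum : ‖aInner A (T (x+y)) (x+y)‖ + ‖aInner A (T (x-y)) (x-y)‖
        + ‖aInner A (T (x + Complex.I • y)) (x + Complex.I • y)‖
        + ‖aInner A (T (x - Complex.I • y)) (x - Complex.I • y)‖
        ≤ alphaNorm A T α * 8 := by
      calc _ ≤ alphaNorm A T α * aNorm A (x+y) ^ 2 + alphaNorm A T α * aNorm A (x-y) ^ 2
            + alphaNorm A T α * aNorm A (x + Complex.I • y) ^ 2
            + alphaNorm A T α * aNorm A (x - Complex.I • y) ^ 2 := by
            linarith
        _ = alphaNorm A T α * ((aNorm A (x+y)^2 + aNorm A (x-y)^2)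
            + (aNorm A (x + Complex.I • y)^2 + aNorm A (x - Complex.I • y)^2)) := by ring
        _ = alphaNorm A T α * 8 := by rw [p1, p2]; norm_num
    linarith
  -- upper bound: for any unit x (not nec. in closure of range A), aNorm(Tx) ≤ opNormA
  have hTop : ∀ x, aNorm A x = 1 → aNorm A (T x) ≤ opNormA A T := by
    intro x hx
    set K : Submodule ℂ H := (LinearMap.range (A : H →ₗ[ℂ] H)).topologicalClosure with hK
    haveI : CompleteSpace K := (Submodule.isClosed_topologicalClosure _).completeSpace_coe
    set u : H := (K.orthogonalProjection x : H) with hud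
    have hw : x - u ∈ Kᗮ := Submodule.sub_starProjection_mem_orthogonal (K := K) x
    have hAw : A (x - u) ∈ K :=
      Submodule.le_topologicalClosure _ (LinearMap.mem_range_self (A : H →ₗ[ℂ] H) _)
    have h0 : (inner ℂ (A (x - u)) (x - u) : ℂ) = 0 :=
      (Submodule.mem_orthogonal K (x - u)).1 hw _ hAw
    have hSw : S (x - u) = 0 := by
      have h2 := hI (x - u) (x - u)
      rw [aInner, h0] at h2
      exact inner_self_eq_zero.1 h2.symm
    have hSx : S x = S u := by
      have h4 : S x - S u = 0 := by rw [← map_sub, hSw]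
      exact sub_eq_zero.1 h4
    have hSTx : S (T x) = S (T u) := by
      have h2 : aNorm A (T (x - u)) = 0 := by
        have h5 := hc (x - u)
        rw [hN (x - u), hSw, norm_zero, mul_zero] at h5
        exact le_antisymm h5 (hNnn _)
      rw [hN] at h2
      have h6 : S (T (x - u)) = 0 := norm_eq_zero.1 h2
      rw [map_sub] at h6
      have h7 : S (T x) - S (T u) = 0 := by rw [← map_sub, h6]
      exact sub_eq_zero.1 h7
    have hu1 : aNorm A u = 1 := by rw [hN, ← hSx, ← hN, hx]
    have humem : u ∈ closure (Set.range ⇑A) := by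
      have hmem : u ∈ (K : Set H) := (K.orthogonalProjection x).2
      rwa [hK, Submodule.topologicalClosure_coe, LinearMap.coe_range,
        ContinuousLinearMap.coe_coe] at hmem
    have hfin : aNorm A (T x) = aNorm A (T u) := by rw [hN, hSTx, ← hN]
    rw [hopEq]
    exact le_csSup hbddop ⟨u, humem, hu1, hfin⟩
  -- upper bound
  have hUpper : alphaNorm A T α ≤ opNormA A T := by
    rw [halphaEq]
    apply Real.sSup_le _ hopnn
    rintro r ⟨x, hx, rfl⟩
    exact (key x hx).trans (hTop x hx)
  -- lower bound
  have hmain : ∀ r ∈ Sop, max (1/2) (Real.sqrt (1 - α)) * r ≤ alphaNorm A T α := by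
    rintro r ⟨x, -, hx, rfl⟩
    have hr0 : 0 ≤ aNorm A (T x) := hNnn _
    have h1 : Real.sqrt (1 - α) * aNorm A (T x) ≤ alphaNorm A T α := by
      have he : Real.sqrt (1 - α) * aNorm A (T x)
          = Real.sqrt ((1 - α) * aNorm A (T x) ^ 2) := by
        rw [Real.sqrt_mul (by linarith), Real.sqrt_sq hr0]
      rw [he]
      calc Real.sqrt ((1 - α) * aNorm A (T x) ^ 2)
          ≤ Real.sqrt (α * ‖aInner A (T x) x‖ ^ 2
              + (1 - α) * aNorm A (T x) ^ 2) := by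
            apply Real.sqrt_le_sqrt
            have : 0 ≤ α * ‖aInner A (T x) x‖ ^ 2 := by positivity
            linarith
        _ ≤ alphaNorm A T α := by rw [halphaEq]; exact le_csSup hbddα ⟨x, hx, rfl⟩
    have h2 : 1/2 * aNorm A (T x) ≤ alphaNorm A T α := by
      rcases eq_or_lt_of_le hr0 with h | h
      · rw [← h, mul_zero]; exact hαnn
      · set r : ℝ := aNorm A (T x) with hrdef
        set t : ℂ := ((r : ℂ))⁻¹ with ht
        set y : H := t • T x with hy
        have hnt : ‖t‖ = r⁻¹ := by
          rw [ht, norm_inv, Complex.norm_real, Real.norm_eq_abs, abs_of_pos h]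
        have hy1 : aNorm A y = 1 := by
          rw [hN, hy, map_smul, norm_smul, hnt, ← hN, ← hrdef, inv_mul_cancel₀ h.ne']
        have hin : aInner A (T x) (T x) = ((r : ℂ)) ^ 2 := by
          rw [hI, inner_self_eq_norm_sq_to_K, ← hN, ← hrdef]; norm_cast
        have h5 : aInner A (T x) y = t * aInner A (T x) (T x) := by
          rw [hy, aInner, inner_smul_right]; rfl
        have habs : ‖aInner A (T x) y‖ = r := by
          rw [h5, hin, norm_mul, hnt, norm_pow, Complex.norm_real, Real.norm_eq_abs,
            abs_of_pos h, sq, inv_mul_cancel_left₀ h.ne']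
        have h6 := hPol x y hx hy1
        rw [habs] at h6
        linarith
    calc max (1/2) (Real.sqrt (1 - α)) * aNorm A (T x)
        = max (1/2 * aNorm A (T x)) (Real.sqrt (1 - α) * aNorm A (T x)) :=
          max_mul_of_nonneg _ _ hr0
      _ ≤ alphaNorm A T α := max_le h2 h1
  have hm : 0 < max (1/2 : ℝ) (Real.sqrt (1 - α)) :=
    lt_of_lt_of_le (by norm_num) (le_max_left _ _)
  have hle : opNormA A T ≤ alphaNorm A T α / max (1/2) (Real.sqrt (1 - α)) := by
    rw [hopEq]
    apply Real.sSup_le _ (div_nonneg hαnn hm.le)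
    intro r hr
    rw [le_div_iff₀ hm, mul_comm]
    exact hmain r hr
  refine ⟨?_, hUpper⟩
  calc max (1/2) (Real.sqrt (1 - α)) * opNormA A T
      ≤ max (1/2) (Real.sqrt (1 - α))
        * (alphaNorm A T α / max (1/2) (Real.sqrt (1 - α))) :=
        mul_le_mul_of_nonneg_left hle hm.le
    _ = alphaNorm A T α := by field_simp
end

section
/- Let T be A-bounded and α ∈ (0,1). If there exists a sequence (x_n) with ‖x_n‖_A = 1 such that ‖Tx_n‖_A → ‖T‖_A and |⟨Tx_n,x_n⟩_A| → w_A(T), then ‖T‖_{A,α} = sqrt(α w_A(T)² + (1−α)‖T‖_A²). -/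
set_option linter.unusedSectionVars false


open scoped ComplexOrder
open ContinuousLinearMap Filter Topology

variable {H : Type*} [NormedAddCommGroup H] [InnerProductSpace ℂ H] [CompleteSpace H]

set_option synthInstance.maxHeartbeats 1000000

private lemma exists_sqrt_fact (A : H →L[ℂ] H) (hA : A.IsPositive) :
    ∃ S : H →L[ℂ] H, IsSelfAdjoint S ∧ ∀ x y : H, aInner A x y = inner ℂ (S x) (S y) := by
  have h0 : 0 ≤ A := (ContinuousLinearMap.nonneg_iff_isPositive A).mpr hA
  have hsa : IsSelfAdjoint (CFC.sqrt A) := IsSelfAdjoint.of_nonneg (CFC.sqrt_nonneg A)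
  refine ⟨CFC.sqrt A, hsa, fun x y => ?_⟩
  have hSS : CFC.sqrt A * CFC.sqrt A = A := CFC.sqrt_mul_sqrt_self A h0
  conv_lhs => rw [aInner, ← hSS]
  rw [show (CFC.sqrt A * CFC.sqrt A) x = CFC.sqrt A (CFC.sqrt A x) from rfl,
    ← ContinuousLinearMap.adjoint_inner_left, hsa.adjoint_eq]

private lemma aNorm_eq_norm (A S : H →L[ℂ] H)
    (hSi : ∀ x y : H, aInner A x y = inner ℂ (S x) (S y)) (z : H) :
    aNorm A z = ‖S z‖ := by
  have h : (inner ℂ (S z) (S z) : ℂ).re = ‖S z‖ ^ 2 := by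
    simpa using inner_self_eq_norm_sq (𝕜 := ℂ) (S z)
  rw [aNorm, hSi, h, Real.sqrt_sq (norm_nonneg _)]

/-- Key reduction: for any unit vector, `aNorm A (T z)` is attained on the closure of the
range of `A`, hence bounded by `opNormA`. -/
private lemma key_reduction (A T : H →L[ℂ] H) (hA : A.IsPositive) (hT : ABounded A T)
    {S : H →L[ℂ] H} (hSi : ∀ x y : H, aInner A x y = inner ℂ (S x) (S y))
    {z : H} (hz : aNorm A z = 1) :
    ∃ z1 ∈ closure (Set.range A), aNorm A z1 = 1 ∧ aNorm A (T z1) = aNorm A (T z) := by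
  obtain ⟨c, hc0, hc⟩ := hT
  set M := (LinearMap.range (A : H →ₗ[ℂ] H)).topologicalClosure with hM
  haveI : CompleteSpace M := (Submodule.isClosed_topologicalClosure _).completeSpace_coe
  set z1 : H := (M.orthogonalProjectionOnto z : H) with hz1
  have hz1M : z1 ∈ M := (M.orthogonalProjectionOnto z).2
  have hz0 : z - z1 ∈ Mᗮ := Submodule.sub_starProjection_mem_orthogonal (K := M) z
  -- A kills z - z1
  have hAz0 : A (z - z1) = 0 := by
    rw [← inner_self_eq_zero (𝕜 := ℂ)]
    have hadj : ContinuousLinearMap.adjoint A = A := hA.isSelfAdjoint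
    have h1 : (inner ℂ (A (z - z1)) (A (z - z1)) : ℂ)
        = inner ℂ (z - z1) (A (A (z - z1))) := by
      nth_rewrite 1 [← hadj]
      exact ContinuousLinearMap.adjoint_inner_left _ _ _
    rw [h1]
    exact (Submodule.mem_orthogonal' M (z - z1)).mp hz0 _
      (Submodule.le_topologicalClosure _ (LinearMap.mem_range_self _ _))
  have hSz0 : S (z - z1) = 0 := by
    rw [← inner_self_eq_zero (𝕜 := ℂ), ← hSi, aInner, hAz0, inner_zero_left]
  have hSTz0 : S (T (z - z1)) = 0 := by
    have := hc (z - z1)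
    rw [aNorm_eq_norm A S hSi, aNorm_eq_norm A S hSi, hSz0, norm_zero, mul_zero] at this
    exact norm_eq_zero.mp (le_antisymm this (norm_nonneg _))
  have hSz : S z1 = S z :=
    (sub_eq_zero.mp (by rw [← map_sub]; exact hSz0)).symm
  have hSTz : S (T z1) = S (T z) := by
    have h' : S (T z) - S (T z1) = 0 := by
      rw [← map_sub, ← map_sub]; exact hSTz0
    exact (sub_eq_zero.mp h').symm
  refine ⟨z1, ?_, ?_, ?_⟩
  · have : (M : Set H) = closure (Set.range A) := by
      rw [hM, Submodule.topologicalClosure_coe, LinearMap.coe_range, ContinuousLinearMap.coe_coe]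
    rw [← this]; exact hz1M
  · rw [aNorm_eq_norm A S hSi, hSz, ← aNorm_eq_norm A S hSi, hz]
  · rw [aNorm_eq_norm A S hSi, aNorm_eq_norm A S hSi, hSTz]

theorem stmt5 (A T : H →L[ℂ] H) (hA : A.IsPositive) (hT : ABounded A T)
    (α : ℝ) (hα : α ∈ Set.Ioo (0:ℝ) 1) (x : ℕ → H) (hx : ∀ n, aNorm A (x n) = 1)
    (h1 : Tendsto (fun n => aNorm A (T (x n))) atTop (𝓝 (opNormA A T)))
    (h2 : Tendsto (fun n => ‖aInner A (T (x n)) (x n)‖) atTop (𝓝 (wA A T))) :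
    alphaNorm A T α = Real.sqrt (α * wA A T ^ 2 + (1 - α) * opNormA A T ^ 2) := by
  obtain ⟨S, hSsa, hSi⟩ := exists_sqrt_fact A hA
  obtain ⟨c, hc0, hc⟩ := hT
  have hN : ∀ z, aNorm A z = ‖S z‖ := aNorm_eq_norm A S hSi
  -- basic bounds
  have hTb : ∀ z : H, aNorm A z = 1 → aNorm A (T z) ≤ c := fun z hz => by
    have := hc z; rwa [hz, mul_one] at this
  have hwb : ∀ z : H, aNorm A z = 1 → ‖aInner A (T z) z‖ ≤ c := by
    intro z hz
    rw [hSi]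
    calc ‖(inner ℂ (S (T z)) (S z) : ℂ)‖ ≤ ‖S (T z)‖ * ‖S z‖ := norm_inner_le_norm _ _
      _ = aNorm A (T z) * aNorm A z := by rw [hN, hN]
      _ ≤ c * 1 := by rw [hz]; exact mul_le_mul_of_nonneg_right (hTb z hz) zero_le_one
      _ = c := mul_one c
  have haN : ∀ z : H, 0 ≤ aNorm A z := fun z => Real.sqrt_nonneg _
  -- bddAbove facts
  have hwBdd : BddAbove {r | ∃ z, aNorm A z = 1 ∧ r = ‖aInner A (T z) z‖} := by
    refine ⟨c, fun r hr => ?_⟩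
    obtain ⟨z, hz, rfl⟩ := hr
    exact hwb z hz
  have hopBdd : BddAbove {r | ∃ z ∈ closure (Set.range A), aNorm A z = 1 ∧ r = aNorm A (T z)} := by
    refine ⟨c, fun r hr => ?_⟩
    obtain ⟨z, _, hz, rfl⟩ := hr
    exact hTb z hz
  have hα0 : (0:ℝ) ≤ α := le_of_lt hα.1
  have hα1 : (0:ℝ) ≤ 1 - α := by linarith [hα.2]
  have haBdd : BddAbove {r | ∃ z, aNorm A z = 1 ∧
      r = Real.sqrt (α * ‖aInner A (T z) z‖ ^ 2 + (1 - α) * aNorm A (T z) ^ 2)} := by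
    refine ⟨Real.sqrt (α * c ^ 2 + (1 - α) * c ^ 2), fun r hr => ?_⟩
    obtain ⟨z, hz, rfl⟩ := hr
    apply Real.sqrt_le_sqrt
    have h1 : ‖aInner A (T z) z‖ ^ 2 ≤ c ^ 2 :=
      pow_le_pow_left₀ (norm_nonneg _) (hwb z hz) 2
    have h2 : aNorm A (T z) ^ 2 ≤ c ^ 2 := pow_le_pow_left₀ (haN _) (hTb z hz) 2
    nlinarith
  -- key bounds on wA and opNormA of individual vectors
  have hwA : ∀ z : H, aNorm A z = 1 → ‖aInner A (T z) z‖ ≤ wA A T := by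
    intro z hz
    exact le_csSup hwBdd ⟨z, hz, rfl⟩
  have hopA : ∀ z : H, aNorm A z = 1 → aNorm A (T z) ≤ opNormA A T := by
    intro z hz
    obtain ⟨z1, hz1c, hz11, hz1T⟩ := key_reduction A T hA ⟨c, hc0, hc⟩ hSi hz
    rw [← hz1T]
    exact le_csSup hopBdd ⟨z1, hz1c, hz11, rfl⟩
  -- nonnegativity of wA and opNormA
  have hwA0 : 0 ≤ wA A T :=
    ge_of_tendsto h2 (Filter.Eventually.of_forall fun n => norm_nonneg _)
  have hopA0 : 0 ≤ opNormA A T :=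
    ge_of_tendsto h1 (Filter.Eventually.of_forall fun n => haN _)
  apply le_antisymm
  · -- alphaNorm ≤ sqrt(...)
    apply Real.sSup_le _ (Real.sqrt_nonneg _)
    rintro r ⟨z, hz, rfl⟩
    apply Real.sqrt_le_sqrt
    have h1' : ‖aInner A (T z) z‖ ^ 2 ≤ wA A T ^ 2 :=
      pow_le_pow_left₀ (norm_nonneg _) (hwA z hz) 2
    have h2' : aNorm A (T z) ^ 2 ≤ opNormA A T ^ 2 :=
      pow_le_pow_left₀ (haN _) (hopA z hz) 2
    nlinarith
  · -- sqrt(...) ≤ alphaNorm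
    have hf : Tendsto (fun n => Real.sqrt (α * ‖aInner A (T (x n)) (x n)‖ ^ 2
        + (1 - α) * aNorm A (T (x n)) ^ 2)) atTop
        (𝓝 (Real.sqrt (α * wA A T ^ 2 + (1 - α) * opNormA A T ^ 2))) := by
      apply (Real.continuous_sqrt.tendsto _).comp
      exact ((h2.pow 2).const_mul α).add ((h1.pow 2).const_mul (1 - α))
    refine le_of_tendsto hf (Filter.Eventually.of_forall fun n => ?_)
    exact le_csSup haBdd ⟨x n, hx n, rfl⟩
end

section
/- If T admits an A-adjoint and U is an A-unitary operator, then ‖U T U^{♯A}‖_{A,α} = ‖T‖_{A,α} for every α ∈ [0,1]. -/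
open scoped ComplexOrder
open ContinuousLinearMap Filter Topology

variable {H : Type*} [NormedAddCommGroup H] [InnerProductSpace ℂ H] [CompleteSpace H]

section Aux

variable {A T U US : H →L[ℂ] H}

/-- `A` self-adjoint: move `A` across the inner ℂ product. -/
lemma aux_sa (hA : A.IsPositive) (u v : H) :
    (inner ℂ (A u) v : ℂ) = inner ℂ u (A v) := by
  conv_lhs => rw [← hA.isSelfAdjoint.adjoint_eq]
  exact ContinuousLinearMap.adjoint_inner_left A v u

/-- `⟪A u, u⟫` is real. -/
lemma aux_real (hA : A.IsPositive) (u : H) :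
    (inner ℂ (A u) u : ℂ) = ((inner ℂ (A u) u : ℂ).re : ℂ) := by
  have h : (starRingEnd ℂ) (inner ℂ (A u) u : ℂ) = inner ℂ (A u) u := by
    rw [inner_conj_symm, aux_sa hA]
  rw [Complex.conj_eq_iff_re] at h
  exact h.symm

/-- Equality of `A`-seminorms gives equality of the quadratic forms. -/
lemma aux_quad (hA : A.IsPositive) {u v : H} (h : aNorm A u = aNorm A v) :
    (inner ℂ (A u) u : ℂ) = inner ℂ (A v) v := by
  have hu : 0 ≤ (inner ℂ (A u) u : ℂ).re := hA.re_inner_nonneg_left u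
  have hv : 0 ≤ (inner ℂ (A v) v : ℂ).re := hA.re_inner_nonneg_left v
  have hre : (inner ℂ (A u) u : ℂ).re = (inner ℂ (A v) v : ℂ).re := by
    have := h
    unfold aNorm aInner at this
    exact (Real.sqrt_inj hu hv).mp this
  rw [aux_real hA u, aux_real hA v, hre]

end Aux

theorem stmt7 (A T U US : H →L[ℂ] H) (hA : A.IsPositive)
    (hT : ∃ S, IsAAdjoint A T S) (hU : IsAAdjoint A U US)
    (hUuni : ∀ x : H, aNorm A (U x) = aNorm A x ∧ aNorm A (US x) = aNorm A x)
    (α : ℝ) (hα : α ∈ Set.Icc (0:ℝ) 1) :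
    alphaNorm A (U ∘L T ∘L US) α = alphaNorm A T α := by
  obtain ⟨S, hS⟩ := hT
  -- pointwise versions of the A-adjoint equations
  have hAUS : ∀ x : H, A (US x) = ContinuousLinearMap.adjoint U (A x) := fun x =>
    congrFun (congrArg (fun f : H →L[ℂ] H => (f : H → H)) hU.1) x
  have hAS : ∀ x : H, A (S x) = ContinuousLinearMap.adjoint T (A x) := fun x =>
    congrFun (congrArg (fun f : H →L[ℂ] H => (f : H → H)) hS.1) x
  -- U* A U = A (pointwise): A (US (U y)) = A y
  have hUAU : ∀ y : H, ContinuousLinearMap.adjoint U (A (U y)) = A y := by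
    have h0 : ∀ x : H, (inner ℂ (((ContinuousLinearMap.adjoint U ∘L A ∘L U - A) x)) x : ℂ) = 0 := by
      intro x
      have h1 : (inner ℂ (ContinuousLinearMap.adjoint U (A (U x))) x : ℂ)
          = inner ℂ (A (U x)) (U x) := ContinuousLinearMap.adjoint_inner_left U x (A (U x))
      have h2 : (inner ℂ (A (U x)) (U x) : ℂ) = inner ℂ (A x) x :=
        aux_quad hA ((hUuni x).1)
      simp only [ContinuousLinearMap.sub_apply, ContinuousLinearMap.comp_apply, inner_sub_left]
      rw [h1, h2, sub_self]
    have hz := (inner_map_self_eq_zero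
      ((ContinuousLinearMap.adjoint U ∘L A ∘L U - A : H →L[ℂ] H) : H →ₗ[ℂ] H)).mp
      (fun x => by simpa [inner_sub_left] using h0 x)
    intro y
    have := LinearMap.congr_fun hz y
    simp only [ContinuousLinearMap.coe_coe, ContinuousLinearMap.sub_apply,
      ContinuousLinearMap.comp_apply, LinearMap.zero_apply] at this
    exact sub_eq_zero.mp this
  have hz' : ∀ y : H, A (US (U y)) = A y := fun y => by rw [hAUS, hUAU]
  -- forward key facts
  have key1 : ∀ x : H, aInner A ((U ∘L T ∘L US) x) x = aInner A (T (US x)) (US x) := by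
    intro x
    unfold aInner
    simp only [ContinuousLinearMap.comp_apply]
    calc (inner ℂ (A (U (T (US x)))) x : ℂ)
        = inner ℂ (U (T (US x))) (A x) := aux_sa hA _ _
      _ = inner ℂ (T (US x)) (ContinuousLinearMap.adjoint U (A x)) := by
          rw [ContinuousLinearMap.adjoint_inner_right]
      _ = inner ℂ (T (US x)) (A (US x)) := by rw [hAUS]
      _ = inner ℂ (A (T (US x))) (US x) := (aux_sa hA _ _).symm
  have key1norm : ∀ x : H, aNorm A ((U ∘L T ∘L US) x) = aNorm A (T (US x)) := by
    intro x
    simp only [ContinuousLinearMap.comp_apply]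
    exact (hUuni (T (US x))).1
  -- invariance under z := US (U y)
  have k2a : ∀ y : H, aInner A (T (US (U y))) (US (U y)) = aInner A (T y) y := by
    intro y
    set z := US (U y) with hzdef
    unfold aInner
    calc (inner ℂ (A (T z)) z : ℂ)
        = inner ℂ (T z) (A z) := aux_sa hA _ _
      _ = inner ℂ (T z) (A y) := by rw [hzdef, hz' y]
      _ = inner ℂ z (ContinuousLinearMap.adjoint T (A y)) := by
          rw [ContinuousLinearMap.adjoint_inner_right]
      _ = inner ℂ z (A (S y)) := by rw [hAS]
      _ = inner ℂ (A z) (S y) := (aux_sa hA _ _).symm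
      _ = inner ℂ (A y) (S y) := by rw [hzdef, hz' y]
      _ = inner ℂ y (A (S y)) := aux_sa hA _ _
      _ = inner ℂ y (ContinuousLinearMap.adjoint T (A y)) := by rw [hAS]
      _ = inner ℂ (T y) (A y) := ContinuousLinearMap.adjoint_inner_right _ _ _
      _ = inner ℂ (A (T y)) y := (aux_sa hA _ _).symm
  have k2b : ∀ y : H, (inner ℂ (A (T (US (U y)))) (T (US (U y))) : ℂ)
      = inner ℂ (A (T y)) (T y) := by
    intro y
    set z := US (U y) with hzdef
    calc (inner ℂ (A (T z)) (T z) : ℂ)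
        = inner ℂ (T z) (A (T z)) := aux_sa hA _ _
      _ = inner ℂ z (ContinuousLinearMap.adjoint T (A (T z))) := by
          rw [ContinuousLinearMap.adjoint_inner_right]
      _ = inner ℂ z (A (S (T z))) := by rw [hAS]
      _ = inner ℂ (A z) (S (T z)) := (aux_sa hA _ _).symm
      _ = inner ℂ (A y) (S (T z)) := by rw [hzdef, hz' y]
      _ = inner ℂ y (A (S (T z))) := aux_sa hA _ _
      _ = inner ℂ y (ContinuousLinearMap.adjoint T (A (T z))) := by rw [hAS]
      _ = inner ℂ (T y) (A (T z)) := ContinuousLinearMap.adjoint_inner_right _ _ _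
      _ = inner ℂ (A (T y)) (T z) := (aux_sa hA _ _).symm
      _ = (starRingEnd ℂ) (inner ℂ (T z) (A (T y))) := (inner_conj_symm _ _).symm
      _ = (starRingEnd ℂ) (inner ℂ z (ContinuousLinearMap.adjoint T (A (T y)))) := by
          rw [ContinuousLinearMap.adjoint_inner_right]
      _ = (starRingEnd ℂ) (inner ℂ z (A (S (T y)))) := by rw [hAS]
      _ = (starRingEnd ℂ) (inner ℂ (A z) (S (T y))) := by rw [aux_sa hA]
      _ = (starRingEnd ℂ) (inner ℂ (A y) (S (T y))) := by rw [hzdef, hz' y]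
      _ = (starRingEnd ℂ) (inner ℂ y (A (S (T y)))) := by rw [aux_sa hA]
      _ = (starRingEnd ℂ) (inner ℂ y (ContinuousLinearMap.adjoint T (A (T y)))) := by rw [hAS]
      _ = (starRingEnd ℂ) (inner ℂ (T y) (A (T y))) := by
          rw [ContinuousLinearMap.adjoint_inner_right]
      _ = inner ℂ (A (T y)) (T y) := inner_conj_symm _ _
  have k2norm : ∀ y : H, aNorm A (T (US (U y))) = aNorm A (T y) := by
    intro y
    unfold aNorm aInner
    rw [k2b y]
  -- set equality
  unfold alphaNorm
  congr 1
  ext r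
  simp only [Set.mem_setOf_eq]
  constructor
  · rintro ⟨x, hx1, rfl⟩
    refine ⟨US x, by rw [(hUuni x).2]; exact hx1, ?_⟩
    rw [key1 x, key1norm x]
  · rintro ⟨y, hy1, rfl⟩
    refine ⟨U y, by rw [(hUuni y).1]; exact hy1, ?_⟩
    rw [key1 (U y), key1norm (U y), k2a y, k2norm y]
end

section
/- For T admitting an A-adjoint and α ∈ [0,1], ‖T‖_{A,α}² ≥ α w_A(T)² + (1−α) c_A(T^{♯A}T), where c_A denotes the A-Crawford number. -/
open scoped ComplexOrder
open ContinuousLinearMap Filter Topology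

variable {H : Type*} [NormedAddCommGroup H] [InnerProductSpace ℂ H] [CompleteSpace H]

private lemma rep_of_sq (A B : H →L[ℂ] H) (hs : B * B = A) (hsa : IsSelfAdjoint B)
    (x y : H) : (inner ℂ (A x) y : ℂ) = inner ℂ (B x) (B y) := by
  subst hs
  calc (inner ℂ ((B * B) x) y : ℂ)
      = inner ℂ (ContinuousLinearMap.adjoint B (B x)) y := by
        rw [hsa.adjoint_eq]; rfl
    _ = inner ℂ (B x) (B y) := ContinuousLinearMap.adjoint_inner_left _ _ _

private lemma exists_sqrt_rep (A : H →L[ℂ] H) (hA : A.IsPositive) :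
    ∃ B : H →L[ℂ] H, ∀ x y : H, (inner ℂ (A x) y : ℂ) = inner ℂ (B x) (B y) := by
  have h0 : (0 : H →L[ℂ] H) ≤ A := (ContinuousLinearMap.nonneg_iff_isPositive A).2 hA
  exact ⟨CFC.sqrt A, rep_of_sq A _ (CFC.sqrt_mul_sqrt_self A h0)
    (IsSelfAdjoint.of_nonneg (CFC.sqrt_nonneg (a := A)))⟩

private lemma key_bound (A T S B : H →L[ℂ] H)
    (hB : ∀ x y : H, (inner ℂ (A x) y : ℂ) = inner ℂ (B x) (B y))
    (hAsa : IsSelfAdjoint A)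
    (hc : A ∘L S = (ContinuousLinearMap.adjoint T) ∘L A) (x : H) :
    ‖B (T x)‖ ^ 2 ≤ ‖S ∘L T‖ * ‖B x‖ ^ 2 := by
  set R := S ∘L T with hRdef
  have hAS : ∀ z, A (S z) = ContinuousLinearMap.adjoint T (A z) := fun z =>
    ContinuousLinearMap.ext_iff.1 hc z
  have hswap : ∀ u v : H, (inner ℂ (B (R u)) (B v) : ℂ) = inner ℂ (B u) (B (R v)) := by
    intro u v
    have h1 : (inner ℂ (B (R u)) (B v) : ℂ) = inner ℂ (A (T u)) (T v) := by
      rw [← hB]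
      show (inner ℂ (A (S (T u))) v : ℂ) = _
      rw [hAS, ContinuousLinearMap.adjoint_inner_left]
    have h2 : (inner ℂ (B u) (B (R v)) : ℂ) = inner ℂ (A (T u)) (T v) := by
      rw [← hB]
      show (inner ℂ (A u) (S (T v)) : ℂ) = _
      calc (inner ℂ (A u) (S (T v)) : ℂ)
          = inner ℂ (ContinuousLinearMap.adjoint A u) (S (T v)) := by rw [hAsa.adjoint_eq]
        _ = inner ℂ u (A (S (T v))) := ContinuousLinearMap.adjoint_inner_left _ _ _
        _ = inner ℂ u (ContinuousLinearMap.adjoint T (A (T v))) := by rw [hAS]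
        _ = inner ℂ (T u) (A (T v)) := ContinuousLinearMap.adjoint_inner_right _ _ _
        _ = inner ℂ (T u) (ContinuousLinearMap.adjoint A (T v)) := by rw [hAsa.adjoint_eq]
        _ = inner ℂ (A (T u)) (T v) := ContinuousLinearMap.adjoint_inner_right _ _ _
    rw [h1, h2]
  have hswapk : ∀ (k : ℕ) (u v : H),
      (inner ℂ (B ((R ^ k) u)) (B v) : ℂ) = inner ℂ (B u) (B ((R ^ k) v)) := by
    intro k
    induction k with
    | zero => intro u v; simp
    | succ k ih =>
      intro u v
      have e : ∀ w : H, (R ^ (k + 1)) w = (R ^ k) (R w) := fun w => by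
        rw [pow_succ, ContinuousLinearMap.mul_apply]
      have e' : ∀ w : H, (R ^ (k + 1)) w = R ((R ^ k) w) := fun w => by
        rw [pow_succ', ContinuousLinearMap.mul_apply]
      rw [e u, ih (R u) v, hswap, ← e' v]
  set f : ℕ → ℝ := fun k => ‖B ((R ^ k) x)‖ with hf
  have hf0le : ∀ k, 0 ≤ f k := fun k => norm_nonneg _
  have hkey : ∀ k, f k ^ 2 ≤ f 0 * f (2 * k) := by
    intro k
    have h1 : (inner ℂ (B ((R ^ k) x)) (B ((R ^ k) x)) : ℂ)
        = inner ℂ (B x) (B ((R ^ (2 * k)) x)) := by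
      rw [hswapk k x ((R ^ k) x)]
      congr 2
      rw [← ContinuousLinearMap.mul_apply, ← pow_add, two_mul]
    calc f k ^ 2 = ‖(inner ℂ (B ((R ^ k) x)) (B ((R ^ k) x)) : ℂ)‖ := by
          rw [inner_self_eq_norm_sq_to_K, norm_pow, RCLike.norm_ofReal,
            abs_of_nonneg (norm_nonneg _)]
      _ = ‖(inner ℂ (B x) (B ((R ^ (2 * k)) x)) : ℂ)‖ := by rw [h1]
      _ ≤ ‖B x‖ * ‖B ((R ^ (2 * k)) x)‖ := norm_inner_le_norm _ _
      _ = f 0 * f (2 * k) := by simp [hf]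
  have hiter : ∀ n : ℕ, f 1 ^ (2 ^ n) ≤ f 0 ^ (2 ^ n - 1) * f (2 ^ n) := by
    intro n
    induction n with
    | zero => simp
    | succ n ih =>
      have hp : 1 ≤ 2 ^ n := Nat.one_le_two_pow
      have h1 : f 1 ^ 2 ^ (n + 1) = (f 1 ^ 2 ^ n) ^ 2 := by
        rw [← pow_mul, pow_succ]
      have h2 : (f 1 ^ 2 ^ n) ^ 2 ≤ (f 0 ^ (2 ^ n - 1) * f (2 ^ n)) ^ 2 :=
        pow_le_pow_left₀ (by positivity) ih 2
      have h4 : f (2 ^ n) ^ 2 ≤ f 0 * f (2 * 2 ^ n) := hkey (2 ^ n)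
      have e1 : 2 ^ (n + 1) - 1 = (2 ^ n - 1) * 2 + 1 := by
        rw [pow_succ]; omega
      have e2 : 2 * 2 ^ n = 2 ^ (n + 1) := by rw [pow_succ]; ring
      calc f 1 ^ 2 ^ (n + 1) = (f 1 ^ 2 ^ n) ^ 2 := h1
        _ ≤ (f 0 ^ (2 ^ n - 1) * f (2 ^ n)) ^ 2 := h2
        _ = f 0 ^ ((2 ^ n - 1) * 2) * f (2 ^ n) ^ 2 := by rw [mul_pow, ← pow_mul]
        _ ≤ f 0 ^ ((2 ^ n - 1) * 2) * (f 0 * f (2 * 2 ^ n)) := by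
            exact mul_le_mul_of_nonneg_left h4 (by positivity)
        _ = f 0 ^ ((2 ^ n - 1) * 2 + 1) * f (2 ^ (n + 1)) := by rw [e2, pow_succ]; ring
        _ = f 0 ^ (2 ^ (n + 1) - 1) * f (2 ^ (n + 1)) := by rw [e1]
  have hgrow : ∀ k : ℕ, 0 < k → f k ≤ ‖B‖ * (‖R‖ ^ k * ‖x‖) := by
    intro k hk
    calc f k ≤ ‖B‖ * ‖(R ^ k) x‖ := B.le_opNorm _
      _ ≤ ‖B‖ * (‖R ^ k‖ * ‖x‖) :=
          mul_le_mul_of_nonneg_left ((R ^ k).le_opNorm x) (norm_nonneg B)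
      _ ≤ ‖B‖ * (‖R‖ ^ k * ‖x‖) := by
          have := norm_pow_le' R hk
          have h := mul_le_mul_of_nonneg_right this (norm_nonneg x)
          exact mul_le_mul_of_nonneg_left h (norm_nonneg B)
  have hclaim : f 1 ≤ ‖R‖ * f 0 := by
    by_contra hcon
    push_neg at hcon
    have hf1 : 0 < f 1 := lt_of_le_of_lt (by positivity) hcon
    rcases eq_or_lt_of_le (hf0le 0) with h0 | hf0pos
    · have h := hiter 1
      simp only [pow_one] at h
      have : f 0 ^ (2 - 1) = 0 := by rw [← h0]; norm_num
      rw [this, zero_mul] at h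
      nlinarith
    · rcases eq_or_lt_of_le (norm_nonneg R) with hR0 | hRpos
      · have : R = 0 := by rw [← norm_eq_zero]; exact hR0.symm
        have : f 1 = 0 := by simp [hf, this]
        linarith
      · set d := ‖R‖ * f 0 with hd
        have hdpos : 0 < d := mul_pos hRpos hf0pos
        set q := f 1 / d with hq
        have hq1 : 1 < q := (one_lt_div hdpos).2 hcon
        set C := ‖B‖ * ‖x‖ / f 0 with hC
        have hqn : ∀ n : ℕ, q ^ 2 ^ n ≤ C := by
          intro n
          have h3 : f 1 ^ 2 ^ n ≤ f 0 ^ (2 ^ n - 1) * (‖B‖ * (‖R‖ ^ 2 ^ n * ‖x‖)) :=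
            le_trans (hiter n) (mul_le_mul_of_nonneg_left
              (hgrow (2 ^ n) (Nat.two_pow_pos n)) (by positivity))
          have e2 : f 0 ^ (2 ^ n - 1) * f 0 = f 0 ^ 2 ^ n := by
            rw [← pow_succ]
            congr 1
            have : 1 ≤ 2 ^ n := Nat.one_le_two_pow
            omega
          rw [hq, div_pow, hC, div_le_div_iff₀ (by positivity) hf0pos]
          calc f 1 ^ 2 ^ n * f 0
              ≤ f 0 ^ (2 ^ n - 1) * (‖B‖ * (‖R‖ ^ 2 ^ n * ‖x‖)) * f 0 :=
                mul_le_mul_of_nonneg_right h3 (le_of_lt hf0pos)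
            _ = ‖B‖ * ‖x‖ * (‖R‖ ^ 2 ^ n * (f 0 ^ (2 ^ n - 1) * f 0)) := by ring
            _ = ‖B‖ * ‖x‖ * (‖R‖ ^ 2 ^ n * f 0 ^ 2 ^ n) := by rw [e2]
            _ = ‖B‖ * ‖x‖ * d ^ 2 ^ n := by rw [hd, mul_pow]
        obtain ⟨n, hn⟩ :=
          ((tendsto_pow_atTop_atTop_of_one_lt hq1).eventually_gt_atTop C).exists
        have hmono : q ^ n ≤ q ^ 2 ^ n :=
          pow_le_pow_right₀ (le_of_lt hq1) (Nat.lt_two_pow_self (n := n)).le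
        linarith [hqn n]
  -- conclude
  have h1 : (inner ℂ (B (T x)) (B (T x)) : ℂ) = inner ℂ (B (R x)) (B x) := by
    rw [← hB, ← hB]
    show (inner ℂ (A (T x)) (T x) : ℂ) = inner ℂ (A (S (T x))) x
    rw [hAS, ContinuousLinearMap.adjoint_inner_left]
  have h2 : ‖B (T x)‖ ^ 2 ≤ f 1 * f 0 := by
    calc ‖B (T x)‖ ^ 2 = ‖(inner ℂ (B (T x)) (B (T x)) : ℂ)‖ := by
          rw [inner_self_eq_norm_sq_to_K, norm_pow, RCLike.norm_ofReal,
            abs_of_nonneg (norm_nonneg _)]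
      _ = ‖(inner ℂ (B (R x)) (B x) : ℂ)‖ := by rw [h1]
      _ ≤ ‖B (R x)‖ * ‖B x‖ := norm_inner_le_norm _ _
      _ = f 1 * f 0 := by simp [hf]
  have h3 : f 1 * f 0 ≤ ‖R‖ * f 0 * f 0 :=
    mul_le_mul_of_nonneg_right hclaim (hf0le 0)
  have hfin : f 0 = ‖B x‖ := by simp [hf]
  calc ‖B (T x)‖ ^ 2 ≤ f 1 * f 0 := h2
    _ ≤ ‖R‖ * f 0 * f 0 := h3
    _ = ‖R‖ * ‖B x‖ ^ 2 := by rw [hfin]; ring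


theorem stmt8 (A T S : H →L[ℂ] H) (hA : A.IsPositive) (hT : IsAAdjoint A T S)
    (α : ℝ) (hα : α ∈ Set.Icc (0:ℝ) 1) :
    alphaNorm A T α ^ 2 ≥ α * wA A T ^ 2 + (1 - α) * cA A (S ∘L T) := by
  obtain ⟨hα0, hα1⟩ := hα
  obtain ⟨B, hB⟩ := exists_sqrt_rep A hA
  have hnorm : ∀ z : H, aNorm A z = ‖B z‖ := by
    intro z
    rw [aNorm, aInner, hB,
      show ((inner ℂ (B z) (B z) : ℂ)).re = RCLike.re (inner ℂ (B z) (B z) : ℂ) from rfl,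
      inner_self_eq_norm_sq, Real.sqrt_sq (norm_nonneg _)]
  have haInner : ∀ u v : H, aInner A u v = inner ℂ (B u) (B v) := fun u v => hB u v
  by_cases hex : ∃ x0 : H, aNorm A x0 = 1
  case neg =>
    push_neg at hex
    have e1 : {r | ∃ x, aNorm A x = 1 ∧ r = ‖aInner A (T x) x‖} = (∅ : Set ℝ) :=
      Set.eq_empty_iff_forall_notMem.2 (fun r ⟨x, hx, _⟩ => hex x hx)
    have e2 : {r | ∃ x, aNorm A x = 1 ∧
        r = ‖aInner A ((S ∘L T) x) x‖} = (∅ : Set ℝ) :=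
      Set.eq_empty_iff_forall_notMem.2 (fun r ⟨x, hx, _⟩ => hex x hx)
    have e3 : {r | ∃ x, aNorm A x = 1 ∧
        r = Real.sqrt (α * ‖aInner A (T x) x‖ ^ 2 + (1 - α) * aNorm A (T x) ^ 2)}
        = (∅ : Set ℝ) :=
      Set.eq_empty_iff_forall_notMem.2 (fun r ⟨x, hx, _⟩ => hex x hx)
    unfold alphaNorm wA cA
    rw [e1, e2, e3, Real.sSup_empty, Real.sInf_empty]
    norm_num
  case pos =>
  obtain ⟨x0, hx0⟩ := hex
  have hRb := key_bound A T S B hB hA.isSelfAdjoint hT.1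
  set M := Real.sqrt ‖S ∘L T‖ with hM
  have hM0 : 0 ≤ M := Real.sqrt_nonneg _
  have hTle : ∀ z : H, aNorm A z = 1 → ‖B (T z)‖ ≤ M := by
    intro z hz
    rw [hnorm] at hz
    have h1 : ‖B (T z)‖ ^ 2 ≤ ‖S ∘L T‖ := by
      have := hRb z; rw [hz] at this; simpa using this
    exact (Real.le_sqrt (norm_nonneg _) (norm_nonneg _)).2 h1
  -- the three sets
  set W : Set ℝ := {r | ∃ x, aNorm A x = 1 ∧ r = ‖aInner A (T x) x‖} with hWdef
  set Cs : Set ℝ := {r | ∃ x, aNorm A x = 1 ∧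
      r = ‖aInner A ((S ∘L T) x) x‖} with hCdef
  set P : Set ℝ := {r | ∃ x, aNorm A x = 1 ∧
      r = Real.sqrt (α * ‖aInner A (T x) x‖ ^ 2 + (1 - α) * aNorm A (T x) ^ 2)}
    with hPdef
  have hwA : wA A T = sSup W := rfl
  have hcA : cA A (S ∘L T) = sInf Cs := rfl
  have hP : alphaNorm A T α = sSup P := rfl
  rw [hwA, hcA, hP]
  -- basic facts
  have habsle : ∀ x : H, aNorm A x = 1 → ‖aInner A (T x) x‖ ≤ M := by
    intro x hx
    rw [haInner]
    calc ‖(inner ℂ (B (T x)) (B x) : ℂ)‖ ≤ ‖B (T x)‖ * ‖B x‖ := norm_inner_le_norm _ _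
      _ = ‖B (T x)‖ := by
          have hx' : ‖B x‖ = 1 := by rw [← hnorm]; exact hx
          rw [hx', mul_one]
      _ ≤ M := hTle x hx
  have hWub : ∀ r ∈ W, r ≤ M := by rintro r ⟨x, hx, rfl⟩; exact habsle x hx
  have hWne : W.Nonempty := ⟨_, x0, hx0, rfl⟩
  have hW0 : 0 ≤ sSup W := le_trans (norm_nonneg _) (le_csSup ⟨M, hWub⟩ ⟨x0, hx0, rfl⟩)
  have hCel : ∀ x : H, aNorm A x = 1 →
      ‖aInner A ((S ∘L T) x) x‖ = aNorm A (T x) ^ 2 := by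
    intro x hx
    have h1 : aInner A ((S ∘L T) x) x = inner ℂ (B (T x)) (B (T x)) := by
      rw [aInner]
      have : A ((S ∘L T) x) = ContinuousLinearMap.adjoint T (A (T x)) :=
        ContinuousLinearMap.ext_iff.1 hT.1 (T x)
      rw [ContinuousLinearMap.comp_apply] at this ⊢
      rw [this, ContinuousLinearMap.adjoint_inner_left, hB]
    rw [h1, inner_self_eq_norm_sq_to_K, hnorm]
    simp [abs_of_nonneg (norm_nonneg _)]
  have hCne : Cs.Nonempty := ⟨_, x0, hx0, rfl⟩
  have hC0 : ∀ r ∈ Cs, (0:ℝ) ≤ r := by rintro r ⟨x, hx, rfl⟩; exact norm_nonneg _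
  have hCbdd : BddBelow Cs := ⟨0, hC0⟩
  have hcA0 : 0 ≤ sInf Cs := le_csInf hCne hC0
  have hcA_le : ∀ x : H, aNorm A x = 1 → sInf Cs ≤ aNorm A (T x) ^ 2 := by
    intro x hx
    have := csInf_le hCbdd (⟨x, hx, rfl⟩ : ‖aInner A ((S ∘L T) x) x‖ ∈ Cs)
    rwa [hCel x hx] at this
  -- bounds on P
  have hPub : ∀ r ∈ P, r ≤ M := by
    rintro r ⟨x, hx, rfl⟩
    have ha := habsle x hx
    have hb : aNorm A (T x) ≤ M := by rw [hnorm]; exact hTle x hx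
    have ha0 : 0 ≤ ‖aInner A (T x) x‖ := norm_nonneg _
    have hb0 : 0 ≤ aNorm A (T x) := Real.sqrt_nonneg _
    have h1 : α * ‖aInner A (T x) x‖ ^ 2 + (1 - α) * aNorm A (T x) ^ 2
        ≤ M ^ 2 := by nlinarith [pow_le_pow_left₀ ha0 ha 2, pow_le_pow_left₀ hb0 hb 2]
    calc Real.sqrt _ ≤ Real.sqrt (M ^ 2) := Real.sqrt_le_sqrt h1
      _ = M := Real.sqrt_sq hM0
  have hPbdd : BddAbove P := ⟨M, hPub⟩
  have hPne : P.Nonempty := ⟨_, x0, hx0, rfl⟩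
  have hL0 : 0 ≤ sSup P :=
    le_trans (Real.sqrt_nonneg _) (le_csSup hPbdd ⟨x0, hx0, rfl⟩)
  -- step 1
  have step1 : ∀ x : H, aNorm A x = 1 →
      α * ‖aInner A (T x) x‖ ^ 2 + (1 - α) * sInf Cs ≤ sSup P ^ 2 := by
    intro x hx
    have harg0 : 0 ≤ α * ‖aInner A (T x) x‖ ^ 2 + (1 - α) * aNorm A (T x) ^ 2 :=
      add_nonneg (mul_nonneg hα0 (sq_nonneg _))
        (mul_nonneg (by linarith) (sq_nonneg _))
    have h1 : Real.sqrt (α * ‖aInner A (T x) x‖ ^ 2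
        + (1 - α) * aNorm A (T x) ^ 2) ≤ sSup P := le_csSup hPbdd ⟨x, hx, rfl⟩
    have h2 : α * ‖aInner A (T x) x‖ ^ 2 + (1 - α) * aNorm A (T x) ^ 2
        ≤ sSup P ^ 2 := by
      rw [← Real.sq_sqrt harg0]
      exact pow_le_pow_left₀ (Real.sqrt_nonneg _) h1 2
    have h3 : (1 - α) * sInf Cs ≤ (1 - α) * aNorm A (T x) ^ 2 :=
      mul_le_mul_of_nonneg_left (hcA_le x hx) (by linarith)
    linarith
  -- conclude
  rcases eq_or_lt_of_le hα0 with hα' | hαpos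
  · have h := step1 x0 hx0
    rw [← hα'] at h ⊢
    simpa using h
  · have hK0' : (1 - α) * sInf Cs ≤ sSup P ^ 2 := by
      have h := step1 x0 hx0
      nlinarith [norm_nonneg (aInner A (T x0) x0), sq_nonneg (‖aInner A (T x0) x0‖)]
    have hK0 : 0 ≤ (sSup P ^ 2 - (1 - α) * sInf Cs) / α :=
      div_nonneg (by linarith) (le_of_lt hαpos)
    have hWle : ∀ r ∈ W, r ≤ Real.sqrt ((sSup P ^ 2 - (1 - α) * sInf Cs) / α) := by
      rintro r ⟨x, hx, rfl⟩
      have h := step1 x hx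
      have h2 : ‖aInner A (T x) x‖ ^ 2
          ≤ (sSup P ^ 2 - (1 - α) * sInf Cs) / α := by
        rw [le_div_iff₀ hαpos]; linarith
      exact (Real.le_sqrt (norm_nonneg _) hK0).2 h2
    have hsup : sSup W ≤ Real.sqrt ((sSup P ^ 2 - (1 - α) * sInf Cs) / α) :=
      csSup_le hWne hWle
    have h5 : sSup W ^ 2 ≤ (sSup P ^ 2 - (1 - α) * sInf Cs) / α := by
      rw [← Real.sq_sqrt hK0]
      exact pow_le_pow_left₀ hW0 hsup 2
    have h6 : sSup W ^ 2 * α ≤ sSup P ^ 2 - (1 - α) * sInf Cs :=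
      (le_div_iff₀ hαpos).1 h5
    linarith
end

section
/- For T admitting an A-adjoint and α ∈ [0,1], ‖T‖_{A,α}² ≥ 2 sqrt(α(1−α)) · c_A(T) · ‖T‖_A. -/
open scoped ComplexOrder
open ContinuousLinearMap Filter Topology

variable {H : Type*} [NormedAddCommGroup H] [InnerProductSpace ℂ H] [CompleteSpace H]

/-- If `a^(n+1) ≤ C * b^(n+1)` for all `n`, with everything nonnegative, then `a ≤ b`. -/
lemma aux_pow_limit {a b C : ℝ} (hb : 0 ≤ b) (h : ∀ n : ℕ, a ^ (n+1) ≤ C * b ^ (n+1)) :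
    a ≤ b := by
  by_contra hab
  push_neg at hab
  have ha' : 0 < a := lt_of_le_of_lt hb hab
  set r := b / a with hr
  have hr0 : 0 ≤ r := div_nonneg hb ha'.le
  have hr1 : r < 1 := (div_lt_one ha').mpr hab
  have key : ∀ n : ℕ, 1 ≤ C * r ^ (n+1) := by
    intro n
    have hpos : 0 < a ^ (n+1) := pow_pos ha' _
    have h2 : 1 * a ^ (n+1) ≤ (C * r ^ (n+1)) * a ^ (n+1) := by
      rw [one_mul]
      calc a ^ (n+1) ≤ C * b ^ (n+1) := h n
        _ = (C * r ^ (n+1)) * a ^ (n+1) := by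
            rw [hr, div_pow, mul_assoc, div_mul_cancel₀ _ hpos.ne']
    exact le_of_mul_le_mul_right h2 hpos
  have htend : Tendsto (fun n : ℕ => C * r ^ (n+1)) atTop (𝓝 0) := by
    have h1 := tendsto_pow_atTop_nhds_zero_of_lt_one hr0 hr1
    have h2 : Tendsto (fun n : ℕ => r ^ (n+1)) atTop (𝓝 0) :=
      h1.comp (tendsto_add_atTop_nat 1)
    simpa using h2.const_mul C
  have : (1:ℝ) ≤ 0 := ge_of_tendsto htend (Eventually.of_forall key)
  linarith

set_option maxHeartbeats 1000000 in
theorem stmt11 (A T S : H →L[ℂ] H) (hA : A.IsPositive) (hT : IsAAdjoint A T S)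
    (α : ℝ) (hα : α ∈ Set.Icc (0:ℝ) 1) :
    alphaNorm A T α ^ 2 ≥ 2 * Real.sqrt (α * (1 - α)) * cA A T * opNormA A T := by
  obtain ⟨hAS, -⟩ := hT
  obtain ⟨hα0, hα1⟩ := hα
  have h1α : (0:ℝ) ≤ 1 - α := by linarith
  -- square root of A
  have h0A : 0 ≤ A := (ContinuousLinearMap.nonneg_iff_isPositive A).mpr hA
  obtain ⟨B, hB, hBB⟩ : ∃ B : H →L[ℂ] H, IsSelfAdjoint B ∧ B ∘L B = A := by
    refine ⟨CFC.sqrt A, IsSelfAdjoint.of_nonneg (CFC.sqrt_nonneg A), ?_⟩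
    have := CFC.sq_sqrt A h0A
    rwa [sq] at this
  have hinner : ∀ x y : H, aInner A x y = inner ℂ (B x) (B y) := by
    intro x y
    calc aInner A x y = inner ℂ (B (B x)) y := by rw [aInner, ← hBB]; rfl
      _ = inner ℂ (adjoint B (B x)) y := by rw [hB.adjoint_eq]
      _ = inner ℂ (B x) (B y) := adjoint_inner_left B y (B x)
  have hnorm : ∀ x : H, aNorm A x = ‖B x‖ := by
    intro x
    rw [aNorm, hinner]
    rw [show ((inner ℂ (B x) (B x) : ℂ)).re = ‖B x‖ ^ 2 by
      exact_mod_cast inner_self_eq_norm_sq (𝕜 := ℂ) (B x)]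
    exact Real.sqrt_sq (norm_nonneg _)
  -- adjoint relations
  have hAT : A ∘L T = adjoint S ∘L A := by
    have h := congrArg adjoint hAS
    rw [adjoint_comp, adjoint_comp, adjoint_adjoint, hA.isSelfAdjoint.adjoint_eq] at h
    exact h.symm
  have hATx : ∀ x, A (T x) = adjoint S (A x) := fun x =>
    congrFun (congrArg DFunLike.coe hAT) x
  have hASx : ∀ x, A (S x) = adjoint T (A x) := fun x =>
    congrFun (congrArg DFunLike.coe hAS) x
  set R : H →L[ℂ] H := S ∘L T with hR
  have hARx : ∀ x, A (R x) = adjoint R (A x) := by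
    intro x
    have : adjoint R = adjoint T ∘L adjoint S := by rw [hR, adjoint_comp]
    rw [this]
    show A (S (T x)) = adjoint T (adjoint S (A x))
    rw [hASx (T x), hATx x]
  -- Cauchy–Schwarz helper
  have hCS : ∀ u v : H, ‖(inner ℂ (B u) (B v) : ℂ)‖ ≤ ‖B u‖ * ‖B v‖ := by
    intro u v
    exact norm_inner_le_norm _ _
  have hre : ∀ u v : H, ((inner ℂ (B u) (B v) : ℂ)).re ≤ ‖B u‖ * ‖B v‖ := fun u v =>
    le_trans (Complex.re_le_norm _) (hCS u v)
  -- the step inequality ‖B (R u)‖² ≤ ‖B u‖ * ‖B (R (R u))‖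
  have hstep : ∀ u : H, ‖B (R u)‖ ^ 2 ≤ ‖B u‖ * ‖B (R (R u))‖ := by
    intro u
    have e1 : (‖B (R u)‖:ℝ) ^ 2 = ((inner ℂ (B (R u)) (B (R u)) : ℂ)).re := by
      exact_mod_cast (inner_self_eq_norm_sq (𝕜 := ℂ) (B (R u))).symm
    have e2 : (inner ℂ (B (R u)) (B (R u)) : ℂ) = inner ℂ (B u) (B (R (R u))) := by
      rw [← hinner, ← hinner, aInner, aInner, hARx u, adjoint_inner_left]
    rw [e1, e2]
    exact hre u (R (R u))
  -- T is A-bounded: for ‖B x‖ = 1, ‖B (T x)‖² ≤ ‖R‖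
  have hbound : ∀ x : H, ‖B x‖ = 1 → ‖B (T x)‖ ^ 2 ≤ ‖R‖ := by
    intro x hx
    set h : ℕ → ℝ := fun k => ‖B ((R ^ k) x)‖ with hh
    have hpowapp : ∀ k : ℕ, (R ^ (k+1)) x = R ((R ^ k) x) := by
      intro k; rw [pow_succ']; rfl
    have hconv : ∀ k : ℕ, h (k+1) ^ 2 ≤ h k * h (k+2) := by
      intro k
      show ‖B ((R ^ (k+1)) x)‖ ^ 2 ≤ ‖B ((R ^ k) x)‖ * ‖B ((R ^ (k+2)) x)‖
      rw [hpowapp (k+1), hpowapp k]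
      exact hstep ((R ^ k) x)
    have hnonneg : ∀ k, 0 ≤ h k := fun k => norm_nonneg _
    have h0 : h 0 = 1 := by simpa [hh] using hx
    -- Chebyshev: h 1 * h k ≤ h (k+1)
    have hcheb : ∀ k : ℕ, h 1 * h k ≤ h (k+1) := by
      intro k
      induction k with
      | zero => simp [h0]
      | succ k ih =>
        rcases eq_or_lt_of_le (hnonneg (k+1)) with he | hp
        · rw [← he, mul_zero]
          exact hnonneg _
        · have h2 : (h 1 * h (k+1)) * h (k+1) ≤ h (k+1) * h (k+2) := by
            calc (h 1 * h (k+1)) * h (k+1) = h 1 * h (k+1) ^ 2 := by ring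
              _ ≤ h 1 * (h k * h (k+2)) :=
                  mul_le_mul_of_nonneg_left (hconv k) (hnonneg 1)
              _ = (h 1 * h k) * h (k+2) := by ring
              _ ≤ h (k+1) * h (k+2) :=
                  mul_le_mul_of_nonneg_right ih (hnonneg (k+2))
          exact le_of_mul_le_mul_right (h2.trans_eq (mul_comm _ _)) hp
    -- h 1 ^ (n+1) ≤ h (n+1)
    have hpow : ∀ n : ℕ, h 1 ^ (n+1) ≤ h (n+1) := by
      intro n
      induction n with
      | zero => simp
      | succ n ih =>
        calc h 1 ^ (n+2) = h 1 * h 1 ^ (n+1) := by ring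
          _ ≤ h 1 * h (n+1) := mul_le_mul_of_nonneg_left ih (hnonneg 1)
          _ ≤ h (n+2) := hcheb (n+1)
    -- h n ≤ (‖B‖ * ‖x‖) * ‖R‖ ^ n for n ≥ 1
    have hgrow : ∀ n : ℕ, h (n+1) ≤ (‖B‖ * ‖x‖) * ‖R‖ ^ (n+1) := by
      intro n
      calc h (n+1) = ‖B ((R ^ (n+1)) x)‖ := rfl
        _ ≤ ‖B‖ * ‖(R ^ (n+1)) x‖ := le_opNorm B _
        _ ≤ ‖B‖ * (‖R ^ (n+1)‖ * ‖x‖) :=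
            mul_le_mul_of_nonneg_left (le_opNorm _ _) (norm_nonneg _)
        _ ≤ ‖B‖ * (‖R‖ ^ (n+1) * ‖x‖) :=
            mul_le_mul_of_nonneg_left
              (mul_le_mul_of_nonneg_right (norm_pow_le' R n.succ_pos) (norm_nonneg x))
              (norm_nonneg B)
        _ = (‖B‖ * ‖x‖) * ‖R‖ ^ (n+1) := by ring
    have h1R : h 1 ≤ ‖R‖ :=
      aux_pow_limit (norm_nonneg R) (fun n => (hpow n).trans (hgrow n))
    -- conclude
    have e1 : (‖B (T x)‖:ℝ) ^ 2 = ((inner ℂ (B (T x)) (B (T x)) : ℂ)).re := by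
      exact_mod_cast (inner_self_eq_norm_sq (𝕜 := ℂ) (B (T x))).symm
    have e2 : (inner ℂ (B (T x)) (B (T x)) : ℂ) = inner ℂ (B x) (B (R x)) := by
      rw [← hinner, ← hinner, aInner, aInner, hATx x, adjoint_inner_left]
      rfl
    calc ‖B (T x)‖ ^ 2 = ((inner ℂ (B x) (B (R x)) : ℂ)).re := by rw [e1, e2]
      _ ≤ ‖B x‖ * ‖B (R x)‖ := hre x (R x)
      _ = h 1 := by rw [hx, one_mul]; simp [hh, pow_one]
      _ ≤ ‖R‖ := h1R
  -- the bound M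
  set M : ℝ := Real.sqrt ‖R‖ with hM
  have hM0 : 0 ≤ M := Real.sqrt_nonneg _
  have hTbound : ∀ x : H, aNorm A x = 1 → aNorm A (T x) ≤ M := by
    intro x hx
    rw [hnorm] at hx ⊢
    have := hbound x hx
    calc ‖B (T x)‖ = Real.sqrt (‖B (T x)‖ ^ 2) := (Real.sqrt_sq (norm_nonneg _)).symm
      _ ≤ M := Real.sqrt_le_sqrt this
  have hIbound : ∀ x : H, aNorm A x = 1 → ‖aInner A (T x) x‖ ≤ M := by
    intro x hx
    have hb := hTbound x hx
    rw [hinner]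
    calc ‖(inner ℂ (B (T x)) (B x) : ℂ)‖ ≤ ‖B (T x)‖ * ‖B x‖ := hCS _ _
      _ = aNorm A (T x) * aNorm A x := by rw [hnorm, hnorm]
      _ = aNorm A (T x) := by rw [hx, mul_one]
      _ ≤ M := hb
  -- nonnegativity of the three quantities
  have hcA0 : 0 ≤ cA A T := by
    apply Real.sInf_nonneg
    rintro r ⟨x, -, rfl⟩
    exact norm_nonneg _
  have hop0 : 0 ≤ opNormA A T := by
    apply Real.sSup_nonneg
    rintro r ⟨x, -, -, rfl⟩
    rw [aNorm]
    exact Real.sqrt_nonneg _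
  have hN0 : 0 ≤ alphaNorm A T α := by
    apply Real.sSup_nonneg
    rintro r ⟨x, -, rfl⟩
    exact Real.sqrt_nonneg _
  -- boundedness of the alphaNorm set
  have hSNbdd : BddAbove {r | ∃ x, aNorm A x = 1 ∧
      r = Real.sqrt (α * ‖aInner A (T x) x‖ ^ 2 + (1 - α) * aNorm A (T x) ^ 2)} := by
    refine ⟨M, ?_⟩
    rintro r ⟨x, hx, rfl⟩
    have ha := hIbound x hx
    have hb := hTbound x hx
    have ha0 : 0 ≤ ‖aInner A (T x) x‖ := norm_nonneg _
    have hb0 : 0 ≤ aNorm A (T x) := by rw [aNorm]; exact Real.sqrt_nonneg _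
    have ha2 : ‖aInner A (T x) x‖ ^ 2 ≤ M ^ 2 := pow_le_pow_left₀ ha0 ha 2
    have hb2 : aNorm A (T x) ^ 2 ≤ M ^ 2 := pow_le_pow_left₀ hb0 hb 2
    have : α * ‖aInner A (T x) x‖ ^ 2 + (1 - α) * aNorm A (T x) ^ 2 ≤ M ^ 2 := by
      nlinarith [ha2, hb2, hα0, h1α]
    calc Real.sqrt (α * ‖aInner A (T x) x‖ ^ 2 + (1 - α) * aNorm A (T x) ^ 2)
        ≤ Real.sqrt (M ^ 2) := Real.sqrt_le_sqrt this
      _ = M := Real.sqrt_sq hM0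
  -- main case split
  set c : ℝ := 2 * Real.sqrt (α * (1 - α)) with hc
  have hc0 : 0 ≤ c := by positivity
  rcases eq_or_lt_of_le (mul_nonneg hc0 hcA0) with hzero | hpos
  · rw [ge_iff_le]
    calc c * cA A T * opNormA A T = 0 * opNormA A T := by rw [← hzero]
      _ = 0 := zero_mul _
      _ ≤ alphaNorm A T α ^ 2 := sq_nonneg _
  · -- key: opNormA ≤ N² / (c * cA)
    have hkey : opNormA A T ≤ alphaNorm A T α ^ 2 / (c * cA A T) := by
      apply Real.sSup_le
      · rintro r ⟨x, -, hx, rfl⟩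
        set a : ℝ := ‖aInner A (T x) x‖ with hadef
        set b : ℝ := aNorm A (T x) with hbdef
        have ha0 : 0 ≤ a := norm_nonneg _
        have hb0 : 0 ≤ b := by rw [hbdef, aNorm]; exact Real.sqrt_nonneg _
        have hκa : cA A T ≤ a := by
          apply csInf_le
          · exact ⟨0, by rintro y ⟨z, -, rfl⟩; exact norm_nonneg _⟩
          · exact ⟨x, hx, rfl⟩
        -- AM-GM
        have hamgm : c * a * b ≤ α * a ^ 2 + (1 - α) * b ^ 2 := by
          have hs : Real.sqrt (α * (1 - α)) = Real.sqrt α * Real.sqrt (1 - α) :=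
            Real.sqrt_mul hα0 _
          rw [hc, hs]
          nlinarith [sq_nonneg (Real.sqrt α * a - Real.sqrt (1 - α) * b),
            Real.sq_sqrt hα0, Real.sq_sqrt h1α,
            Real.sqrt_nonneg α, Real.sqrt_nonneg (1 - α)]
        -- the quadratic quantity is ≤ N²
        have hmem : Real.sqrt (α * a ^ 2 + (1 - α) * b ^ 2) ≤ alphaNorm A T α :=
          le_csSup hSNbdd ⟨x, hx, rfl⟩
        have hq0 : 0 ≤ α * a ^ 2 + (1 - α) * b ^ 2 := by positivity
        have hqN : α * a ^ 2 + (1 - α) * b ^ 2 ≤ alphaNorm A T α ^ 2 := by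
          have := pow_le_pow_left₀ (Real.sqrt_nonneg _) hmem 2
          rwa [Real.sq_sqrt hq0] at this
        have hchain : (c * cA A T) * b ≤ alphaNorm A T α ^ 2 := by
          calc (c * cA A T) * b ≤ c * a * b :=
              mul_le_mul_of_nonneg_right (mul_le_mul_of_nonneg_left hκa hc0) hb0
            _ ≤ α * a ^ 2 + (1 - α) * b ^ 2 := hamgm
            _ ≤ alphaNorm A T α ^ 2 := hqN
        rw [le_div_iff₀ hpos]
        calc b * (c * cA A T) = (c * cA A T) * b := by ring
          _ ≤ alphaNorm A T α ^ 2 := hchain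
      · exact div_nonneg (sq_nonneg _) (le_of_lt hpos)
    rw [ge_iff_le]
    calc c * cA A T * opNormA A T
        ≤ c * cA A T * (alphaNorm A T α ^ 2 / (c * cA A T)) :=
          mul_le_mul_of_nonneg_left hkey (le_of_lt hpos)
      _ = alphaNorm A T α ^ 2 := mul_div_cancel₀ _ (ne_of_gt hpos)
end
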